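/- arXiv:2310.09227 — 6 statements merged into one kernel-verified Lean document; each statement's English description precedes it below -/
import Mathlib

section
/- Let n, k be natural numbers with n ≥ 2k − 1. Then the number of standard k-element subsets of {1,…,n} equals C(n,k) − C(n,k−1). -/
open scoped Classical

/-- Integer binomial coefficient with the convention `C x y = 0` unless `0 ≤ y ≤ x`. -/
noncomputable def C (x y : ℤ) : ℤ :=
  if 0 ≤ y ∧ y ≤ x then (x.toNat).choose y.toNat else 0

/-- A finset `β = {b₁ < b₂ < … < b_m}` of naturals is *standard* if `bᵢ ≥ 2i` for all `i`. -/
def IsStandard (β : Finset ℕ) : Prop :=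
  ∀ i < β.card, 2 * (i + 1) ≤ (β.sort (· ≤ ·)).getD i 0

/-- The standard `k`-element subsets of `{1,…,n}`. -/
noncomputable def stdSets (n k : ℕ) : Finset (Finset ℕ) :=
  (Finset.Icc 1 n).powerset.filter fun β => IsStandard β ∧ β.card = k

lemma filter_sorted_eq_take (l : List ℕ) (hsl : l.Pairwise (· < ·)) (i : ℕ) (hi : i < l.length) :
    l.filter (fun x => x ≤ l[i]) = l.take (i + 1) := by
  have hmemtake : l[i] ∈ l.take (i+1) := by
    have h1 : i < (l.take (i+1)).length := by simp; omega
    have h2 : (l.take (i+1))[i] = l[i] := List.getElem_take ..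
    rw [← h2]; exact List.getElem_mem _
  obtain ⟨b, hb⟩ : ∃ b, l[i] = b := ⟨_, rfl⟩
  rw [hb] at hmemtake ⊢
  conv_lhs => rw [← List.take_append_drop (i+1) l]
  rw [List.filter_append]
  have h1 : (l.take (i+1)).filter (fun x => x ≤ b) = l.take (i+1) := by
    apply List.filter_eq_self.mpr
    intro x hx
    simp only [decide_eq_true_eq]
    rw [List.take_succ] at hx
    rcases List.mem_append.mp hx with hx | hx
    · have : x < l[i] := hsl.rel_of_mem_take_of_mem_drop hx
        (by have : (l.drop i)[0]'(by simp; omega) = l[i] := by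
              simp
            rw [← this]; exact List.getElem_mem _)
      omega
    · have hsome : l[i]? = some l[i] := List.getElem?_eq_getElem hi
      simp [hsome] at hx
      omega
  have h2 : (l.drop (i+1)).filter (fun x => x ≤ b) = [] := by
    apply List.filter_eq_nil_iff.mpr
    intro x hx
    simp only [decide_eq_true_eq]
    have : b < x := hsl.rel_of_mem_take_of_mem_drop hmemtake hx
    omega
  rw [h1, h2, List.append_nil]

lemma card_filter_le_sort (β : Finset ℕ) (i : ℕ) (hi : i < β.card)
    (hi' : i < (β.sort (· ≤ ·)).length) :
    (β.filter (fun x => x ≤ (β.sort (· ≤ ·))[i])).card = i + 1 := by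
  set l := β.sort (· ≤ ·) with hl
  have hnd : l.Nodup := β.sort_nodup _
  have key := filter_sorted_eq_take l (β.sortedLT_sort.pairwise) i hi'
  have h2 : (l.filter (fun x => x ≤ l[i])).toFinset = β.filter (fun x => x ≤ l[i]) := by
    ext x
    simp only [List.mem_toFinset, List.mem_filter, Finset.mem_filter, decide_eq_true_eq, hl,
      Finset.mem_sort]
  rw [← h2, key]
  rw [List.toFinset_card_of_nodup (hnd.sublist (List.take_sublist _ _))]
  rw [List.length_take]
  omega

lemma isStandard_iff (β : Finset ℕ) :
    IsStandard β ↔ ∀ b ∈ β, 2 * (β.filter (fun x => x ≤ b)).card ≤ b := by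
  constructor
  · intro hs b hb
    have hbl : b ∈ β.sort (· ≤ ·) := (Finset.mem_sort _).mpr hb
    obtain ⟨j, hj, rfl⟩ := List.getElem_of_mem hbl
    have hj' : j < β.card := by rwa [Finset.length_sort] at hj
    have h := hs j hj'
    rw [List.getD_eq_getElem _ 0 hj] at h
    rw [card_filter_le_sort β j hj' hj]
    exact h
  · intro hb i hi
    have hi' : i < (β.sort (· ≤ ·)).length := by rw [Finset.length_sort]; exact hi
    rw [List.getD_eq_getElem _ 0 hi']
    have hmem : (β.sort (· ≤ ·))[i] ∈ β := (Finset.mem_sort _).mp (List.getElem_mem _)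
    have h := hb _ hmem
    rwa [card_filter_le_sort β i hi hi'] at h

lemma mem_stdSets {n k : ℕ} {β : Finset ℕ} :
    β ∈ stdSets n k ↔ β ⊆ Finset.Icc 1 n ∧ IsStandard β ∧ β.card = k := by
  simp [stdSets, Finset.mem_filter, Finset.mem_powerset, and_assoc]

lemma stdSets_zero (n : ℕ) : stdSets n 0 = {∅} := by
  ext β
  rw [mem_stdSets, Finset.mem_singleton, Finset.card_eq_zero]
  constructor
  · rintro ⟨-, -, rfl⟩; rfl
  · rintro rfl
    refine ⟨Finset.empty_subset _, ?_, rfl⟩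
    intro i hi
    simp at hi

lemma stdSets_eq_empty {n k : ℕ} (hk : 1 ≤ k) (hn : n < 2 * k) : stdSets n k = ∅ := by
  rw [Finset.eq_empty_iff_forall_notMem]
  intro β hβ
  rw [mem_stdSets] at hβ
  obtain ⟨hsub, hstd, hcard⟩ := hβ
  have hne : β.Nonempty := Finset.card_pos.mp (by omega)
  set b := β.max' hne with hb
  have hbβ : b ∈ β := β.max'_mem hne
  have hfil : β.filter (fun x => x ≤ b) = β := by
    apply Finset.filter_eq_self.mpr
    intro x hx
    exact β.le_max' x hx
  have h := (isStandard_iff β).mp hstd b hbβ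
  rw [hfil, hcard] at h
  have : b ≤ n := (Finset.mem_Icc.mp (hsub hbβ)).2
  omega

lemma stdSets_rec (m j : ℕ) (hn : 2 * (j + 1) ≤ m + 1) :
    (stdSets (m+1) (j+1)).card = (stdSets m (j+1)).card + (stdSets m j).card := by
  have hsplit := Finset.card_filter_add_card_filter_not
    (s := stdSets (m+1) (j+1)) (p := fun β => (m+1) ∈ β)
  have hA : (stdSets (m+1) (j+1)).filter (fun β => ¬ (m+1) ∈ β) = stdSets m (j+1) := by
    ext β
    rw [Finset.mem_filter, mem_stdSets, mem_stdSets]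
    constructor
    · rintro ⟨⟨hsub, hstd, hcard⟩, hnotmem⟩
      refine ⟨?_, hstd, hcard⟩
      intro x hx
      have h1 := Finset.mem_Icc.mp (hsub hx)
      have h2 : x ≠ m+1 := fun h => hnotmem (h ▸ hx)
      rw [Finset.mem_Icc]
      omega
    · rintro ⟨hsub, hstd, hcard⟩
      have hnm : (m+1) ∉ β := fun h => by
        have := (Finset.mem_Icc.mp (hsub h)).2; omega
      refine ⟨⟨?_, hstd, hcard⟩, hnm⟩
      intro x hx
      have := Finset.mem_Icc.mp (hsub hx)
      rw [Finset.mem_Icc]; omega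
  have hB : ((stdSets (m+1) (j+1)).filter (fun β => (m+1) ∈ β)).card = (stdSets m j).card := by
    apply Finset.card_bij (fun β _ => β.erase (m+1))
    · intro β hβ
      rw [Finset.mem_filter, mem_stdSets] at hβ
      obtain ⟨⟨hsub, hstd, hcard⟩, hmem⟩ := hβ
      rw [mem_stdSets]
      refine ⟨?_, ?_, ?_⟩
      · intro x hx
        obtain ⟨hne, hxβ⟩ := Finset.mem_erase.mp hx
        have := Finset.mem_Icc.mp (hsub hxβ)
        rw [Finset.mem_Icc]; omega
      · rw [isStandard_iff]
        intro b hb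
        obtain ⟨hne, hbβ⟩ := Finset.mem_erase.mp hb
        have hble : b ≤ m := by
          have := Finset.mem_Icc.mp (hsub hbβ); omega
        have hfe : (β.erase (m+1)).filter (fun x => x ≤ b) = β.filter (fun x => x ≤ b) := by
          ext x
          simp only [Finset.mem_filter, Finset.mem_erase]
          constructor
          · rintro ⟨⟨_, h2⟩, h3⟩; exact ⟨h2, h3⟩
          · rintro ⟨h2, h3⟩; exact ⟨⟨by omega, h2⟩, h3⟩
        rw [hfe]
        exact (isStandard_iff β).mp hstd b hbβ
      · rw [Finset.card_erase_of_mem hmem, hcard]; omega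
    · intro β₁ h₁ β₂ h₂ heq
      rw [Finset.mem_filter] at h₁ h₂
      rw [← Finset.insert_erase h₁.2, ← Finset.insert_erase h₂.2, heq]
    · intro γ hγ
      rw [mem_stdSets] at hγ
      obtain ⟨hsub, hstd, hcard⟩ := hγ
      have hnm : (m+1) ∉ γ := fun h => by
        have := (Finset.mem_Icc.mp (hsub h)).2; omega
      refine ⟨insert (m+1) γ, ?_, ?_⟩
      · rw [Finset.mem_filter, mem_stdSets]
        refine ⟨⟨?_, ?_, ?_⟩, Finset.mem_insert_self _ _⟩
        · intro x hx
          rcases Finset.mem_insert.mp hx with rfl | hx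
          · rw [Finset.mem_Icc]; omega
          · have := Finset.mem_Icc.mp (hsub hx)
            rw [Finset.mem_Icc]; omega
        · rw [isStandard_iff]
          intro b hb
          rcases Finset.mem_insert.mp hb with rfl | hb
          · have hfull : (insert (m+1) γ).filter (fun x => x ≤ m+1) = insert (m+1) γ := by
              apply Finset.filter_eq_self.mpr
              intro x hx
              rcases Finset.mem_insert.mp hx with rfl | hx
              · omega
              · have := (Finset.mem_Icc.mp (hsub hx)).2; omega
            rw [hfull, Finset.card_insert_of_notMem hnm, hcard]
            omega
          · have hble : b ≤ m := (Finset.mem_Icc.mp (hsub hb)).2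
            have hfe : (insert (m+1) γ).filter (fun x => x ≤ b) = γ.filter (fun x => x ≤ b) := by
              ext x
              simp only [Finset.mem_filter, Finset.mem_insert]
              constructor
              · rintro ⟨hx | hx, h3⟩
                · exact (by omega : False).elim
                · exact ⟨hx, h3⟩
              · rintro ⟨hx, h3⟩; exact ⟨Or.inr hx, h3⟩
            rw [hfe]
            exact (isStandard_iff γ).mp hstd b hb
        · rw [Finset.card_insert_of_notMem hnm, hcard]
      · rw [Finset.erase_insert hnm]
  rw [hA] at hsplit
  rw [← hsplit, hB, Nat.add_comm]

lemma C_pascal (x y : ℤ) (hx : 1 ≤ x) : C x y = C (x - 1) y + C (x - 1) (y - 1) := by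
  unfold C
  by_cases h0 : y < 0
  · rw [if_neg (by omega), if_neg (by omega), if_neg (by omega)]; ring
  by_cases h1 : y = 0
  · subst h1
    rw [if_pos (by omega), if_pos (by omega), if_neg (by omega)]
    simp
  by_cases h2 : x < y
  · rw [if_neg (by omega), if_neg (by omega), if_neg (by omega)]; ring
  by_cases h3 : y = x
  · subst h3
    rw [if_pos (by omega), if_neg (by omega), if_pos (by omega)]
    simp [Nat.choose_self]
  · -- 1 ≤ y ≤ x - 1
    rw [if_pos (by omega), if_pos (by omega), if_pos (by omega)]
    have ha : x.toNat = (x-1).toNat + 1 := by omega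
    have hb : y.toNat = (y-1).toNat + 1 := by omega
    rw [ha, hb, Nat.choose_succ_succ]
    push_cast
    ring

theorem statement0 (n k : ℕ) (h : (n : ℤ) ≥ 2 * k - 1) :
    ((stdSets n k).card : ℤ) = C n k - C n ((k : ℤ) - 1) := by
  induction n using Nat.strong_induction_on generalizing k with
  | _ n ih =>
    cases k with
    | zero =>
      rw [stdSets_zero]
      simp only [Finset.card_singleton, Nat.cast_zero, Nat.cast_one]
      unfold C
      rw [if_pos (by constructor <;> omega), if_neg (by omega)]
      simp
    | succ j =>
      by_cases hn : n = 2*j + 1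
      · subst hn
        rw [stdSets_eq_empty (by omega) (by omega)]
        simp only [Finset.card_empty, Nat.cast_zero]
        unfold C
        rw [if_pos (by constructor <;> omega), if_pos (by constructor <;> omega)]
        have e1 : ((2*j+1 : ℕ) : ℤ).toNat = 2*j+1 := by omega
        have e2 : ((j+1 : ℕ) : ℤ).toNat = j+1 := by omega
        have e3 : (((j+1 : ℕ) : ℤ) - 1).toNat = j := by omega
        rw [e1, e2, e3]
        have := Nat.choose_symm_half j
        omega
      · have hge : 2 * (j + 1) ≤ n := by omega
        obtain ⟨m, rfl⟩ : ∃ m, n = m + 1 := ⟨n - 1, by omega⟩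
        rw [stdSets_rec m j (by omega)]
        have ih1 := ih m (by omega) (j+1) (by push_cast; omega)
        have ih2 := ih m (by omega) j (by push_cast; omega)
        push_cast at ih1 ih2 ⊢
        have e1 := C_pascal ((m:ℤ)+1) ((j:ℤ)+1) (by omega)
        have e2 := C_pascal ((m:ℤ)+1) (j:ℤ) (by omega)
        simp only [add_sub_cancel_right] at e1 e2 ih1 ih2 ⊢
        rw [ih1, ih2, e1, e2]
        ring
end

section
/- Let n, k be natural numbers with n ≥ 2k − 1. Then the number of standard subsets of {1,…,n} of size at most k equals C(n,k). (In particular the Bier matrix P_k is square.) -/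
open scoped Classical

/-- The standard subsets of `{1,…,n}` of size at most `k`. -/
noncomputable def stdLe (n k : ℕ) : Finset (Finset ℕ) :=
  (Finset.Icc 1 n).powerset.filter fun β => IsStandard β ∧ β.card ≤ k

lemma mem_stdLe {n k : ℕ} {β : Finset ℕ} :
    β ∈ stdLe n k ↔ β ⊆ Finset.Icc 1 n ∧ IsStandard β ∧ β.card ≤ k := by
  simp [stdLe, Finset.mem_filter, Finset.mem_powerset]

lemma sort_insert_max {β : Finset ℕ} {n : ℕ} (h : ∀ x ∈ β, x < n) :
    (insert n β).sort (· ≤ ·) = β.sort (· ≤ ·) ++ [n] := by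
  have hn : n ∉ β := fun hm => lt_irrefl n (h n hm)
  apply List.Perm.eq_of_pairwise' (Finset.pairwise_sort _ _) ?_ ?_
  · show List.Pairwise _ _
    rw [List.pairwise_append]
    refine ⟨Finset.pairwise_sort _ _, List.pairwise_singleton _ n, ?_⟩
    intro a ha b hb
    rw [List.mem_singleton] at hb
    subst hb
    exact (h a ((Finset.mem_sort _).1 ha)).le
  · rw [← Multiset.coe_eq_coe]
    have h1 : ((insert n β).sort (· ≤ ·) : Multiset ℕ) = (insert n β).1 :=
      Finset.sort_eq _ _
    rw [h1, Finset.insert_val_of_notMem hn, ← Multiset.coe_add (β.sort (· ≤ ·)) [n],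
      Finset.sort_eq, add_comm]
    simp [Multiset.singleton_add]

lemma isStandard_insert {β : Finset ℕ} {n : ℕ} (h : ∀ x ∈ β, x < n) :
    IsStandard (insert n β) ↔ IsStandard β ∧ 2 * (β.card + 1) ≤ n := by
  have hn : n ∉ β := fun hm => lt_irrefl n (h n hm)
  have hcard : (insert n β).card = β.card + 1 := Finset.card_insert_of_notMem hn
  have hlen : (β.sort (· ≤ ·)).length = β.card := Finset.length_sort _
  constructor
  · intro hs
    constructor
    · intro i hi
      have := hs i (by omega)
      rwa [sort_insert_max h, List.getD_append _ _ _ _ (by omega)] at this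
    · have := hs β.card (by omega)
      rwa [sort_insert_max h, List.getD_append_right _ _ _ _ (by omega),
        hlen, Nat.sub_self] at this
  · rintro ⟨hs, hle⟩ i hi
    rw [hcard] at hi
    rw [sort_insert_max h]
    rcases Nat.lt_or_ge i β.card with hi' | hi'
    · rw [List.getD_append _ _ _ _ (by omega)]
      exact hs i hi'
    · have : i = β.card := by omega
      subst this
      rw [List.getD_append_right _ _ _ _ (by omega), hlen, Nat.sub_self]
      exact hle

lemma isStandard_empty : IsStandard ∅ := by
  intro i hi
  simp at hi

lemma stdLe_zero (n : ℕ) : stdLe n 0 = {∅} := by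
  ext β
  rw [mem_stdLe, Finset.mem_singleton]
  constructor
  · rintro ⟨-, -, hc⟩
    exact Finset.card_eq_zero.1 (Nat.le_zero.1 hc)
  · rintro rfl
    exact ⟨Finset.empty_subset _, isStandard_empty, le_refl 0⟩

/-- A nonempty standard subset of `Icc 1 n` has `2 * card ≤ n`. -/
lemma card_le_of_standard {n : ℕ} {β : Finset ℕ} (hsub : β ⊆ Finset.Icc 1 n)
    (hs : IsStandard β) (hne : β.Nonempty) : 2 * β.card ≤ n := by
  have hc : 0 < β.card := Finset.card_pos.2 hne
  have hlen : (β.sort (· ≤ ·)).length = β.card := Finset.length_sort _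
  have hi : β.card - 1 < β.card := by omega
  have h1 := hs (β.card - 1) hi
  have hmem : (β.sort (· ≤ ·)).getD (β.card - 1) 0 ∈ β := by
    rw [List.getD_eq_getElem _ _ (by omega)]
    exact (Finset.mem_sort _).1 (List.getElem_mem _)
  have h2 := (Finset.mem_Icc.1 (hsub hmem)).2
  omega

/-- Pascal-type recursion for the sets themselves. -/
lemma stdLe_succ (n k : ℕ) (hnk : 2 * (k + 1) ≤ n + 1) :
    stdLe (n + 1) (k + 1) =
      stdLe n (k + 1) ∪ (stdLe n k).image (insert (n + 1)) := by
  ext β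
  rw [mem_stdLe, Finset.mem_union, Finset.mem_image]
  constructor
  · rintro ⟨hsub, hs, hc⟩
    by_cases hn : n + 1 ∈ β
    · right
      refine ⟨β.erase (n + 1), mem_stdLe.2 ?_, Finset.insert_erase hn⟩
      have hlt : ∀ x ∈ β.erase (n + 1), x < n + 1 := by
        intro x hx
        have h1 := Finset.mem_of_mem_erase hx
        have h2 := Finset.ne_of_mem_erase hx
        have := (Finset.mem_Icc.1 (hsub h1)).2
        omega
      have hins : insert (n + 1) (β.erase (n + 1)) = β := Finset.insert_erase hn
      have hstd : IsStandard (insert (n + 1) (β.erase (n + 1))) := by rwa [hins]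
      obtain ⟨hs', -⟩ := (isStandard_insert hlt).1 hstd
      refine ⟨?_, hs', ?_⟩
      · intro x hx
        have := Finset.mem_Icc.1 (hsub (Finset.mem_of_mem_erase hx))
        have := hlt x hx
        exact Finset.mem_Icc.2 (by omega)
      · have := Finset.card_erase_of_mem hn
        omega
    · left
      refine mem_stdLe.2 ⟨?_, hs, hc⟩
      intro x hx
      have := Finset.mem_Icc.1 (hsub hx)
      have : x ≠ n + 1 := fun h => hn (h ▸ hx)
      exact Finset.mem_Icc.2 (by omega)
  · rintro (hmem | ⟨β', hβ', rfl⟩)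
    · obtain ⟨hsub, hs, hc⟩ := mem_stdLe.1 hmem
      exact ⟨hsub.trans (Finset.Icc_subset_Icc_right (by omega)), hs, hc⟩
    · obtain ⟨hsub, hs, hc⟩ := mem_stdLe.1 hβ'
      have hlt : ∀ x ∈ β', x < n + 1 := by
        intro x hx
        have := (Finset.mem_Icc.1 (hsub hx)).2
        omega
      have hn : n + 1 ∉ β' := fun hm => lt_irrefl _ (hlt _ hm)
      refine ⟨?_, ?_, ?_⟩
      · intro x hx
        rcases Finset.mem_insert.1 hx with rfl | hx
        · exact Finset.mem_Icc.2 ⟨by omega, le_refl _⟩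
        · have := Finset.mem_Icc.1 (hsub hx)
          exact Finset.mem_Icc.2 (by omega)
      · exact (isStandard_insert hlt).2 ⟨hs, by omega⟩
      · rw [Finset.card_insert_of_notMem hn]; omega

lemma key : ∀ m n k, n + k = m → 2 * k ≤ n + 1 → (stdLe n k).card = n.choose k := by
  intro m
  induction m using Nat.strong_induction_on with
  | _ m ih =>
    intro n k hm hk
    match k with
    | 0 => simp [stdLe_zero]
    | k + 1 =>
      rcases Nat.lt_or_ge n (2 * (k + 1)) with hlt | hge
      · -- n = 2k+1
        have hn : n = 2 * k + 1 := by omega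
        have heq : stdLe n (k + 1) = stdLe n k := by
          ext β
          rw [mem_stdLe, mem_stdLe]
          constructor
          · rintro ⟨hsub, hs, hc⟩
            refine ⟨hsub, hs, ?_⟩
            rcases Finset.eq_empty_or_nonempty β with rfl | hne
            · simp
            · have := card_le_of_standard hsub hs hne
              omega
          · rintro ⟨hsub, hs, hc⟩
            exact ⟨hsub, hs, by omega⟩
        rw [heq, ih (n + k) (by omega) n k rfl (by omega)]
        have : n - k = k + 1 := by omega
        rw [← Nat.choose_symm (by omega : k ≤ n), this]
      · -- n ≥ 2(k+1), so n = n' + 1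
        obtain ⟨n', rfl⟩ : ∃ n', n = n' + 1 := ⟨n - 1, by omega⟩
        rw [stdLe_succ n' k (by omega)]
        have hdisj : Disjoint (stdLe n' (k + 1)) ((stdLe n' k).image (insert (n' + 1))) := by
          rw [Finset.disjoint_left]
          rintro β hβ hβ'
          obtain ⟨β', hβ', rfl⟩ := Finset.mem_image.1 hβ'
          obtain ⟨hsub, -, -⟩ := mem_stdLe.1 hβ
          have := (Finset.mem_Icc.1 (hsub (Finset.mem_insert_self _ _))).2
          omega
        rw [Finset.card_union_of_disjoint hdisj]
        have hinj : ((stdLe n' k).image (insert (n' + 1))).card = (stdLe n' k).card := by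
          apply Finset.card_image_of_injOn
          intro a ha b hb hab
          obtain ⟨hsa, -, -⟩ := mem_stdLe.1 ha
          obtain ⟨hsb, -, -⟩ := mem_stdLe.1 hb
          have hna : n' + 1 ∉ a := fun hm => by
            have := (Finset.mem_Icc.1 (hsa hm)).2; omega
          have hnb : n' + 1 ∉ b := fun hm => by
            have := (Finset.mem_Icc.1 (hsb hm)).2; omega
          have : (insert (n' + 1) a).erase (n' + 1) = (insert (n' + 1) b).erase (n' + 1) := by
            rw [hab]
          rwa [Finset.erase_insert hna, Finset.erase_insert hnb] at this
        rw [hinj, ih (n' + (k + 1)) (by omega) n' (k + 1) rfl (by omega),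
          ih (n' + k) (by omega) n' k rfl (by omega)]
        rw [Nat.choose_succ_succ']
        omega

theorem statement1 (n k : ℕ) (h : (n : ℤ) ≥ 2 * k - 1) :
    (stdLe n k).card = n.choose k := by
  exact key (n + k) n k rfl (by omega)
end

section
/- Let 0 ≤ ℓ ≤ k_r ≤ k_c ≤ n be integers. Let A be a k_r-element subset of {1,…,n} and β a standard subset of {1,…,n} of size b ≤ k_c, and set a = |A ∩ β|. Then the number of k_c-element subsets T of {1,…,n} satisfying |A ∩ T| = ℓ and β ⊆ T equals C(k_r − a, ℓ − a) · C(n − b − k_r + a, k_c − b − ℓ + a). (This number is the (A,β) entry of the product A_{n,k_r,k_c,ℓ} · P_{k_c}.) -/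
open scoped Classical

lemma C_eq_choose (x y : ℤ) (hx : 0 ≤ x) (hy : 0 ≤ y) :
    C x y = (x.toNat).choose y.toNat := by
  unfold C
  split_ifs with h
  · rfl
  · have hlt : x.toNat < y.toNat := by omega
    simp [Nat.choose_eq_zero_of_lt hlt]

theorem statement3 (n kr kc ℓ : ℕ) (h1 : ℓ ≤ kr) (h2 : kr ≤ kc) (h3 : kc ≤ n)
    (A β : Finset ℕ) (hA : A ⊆ Finset.Icc 1 n) (hAcard : A.card = kr)
    (hβ : β ⊆ Finset.Icc 1 n) (hstd : IsStandard β) (hb : β.card ≤ kc) :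
    (((Finset.Icc 1 n).powerset.filter fun T =>
        T.card = kc ∧ (A ∩ T).card = ℓ ∧ β ⊆ T).card : ℤ)
      = C ((kr : ℤ) - (A ∩ β).card) ((ℓ : ℤ) - (A ∩ β).card) *
        C ((n : ℤ) - β.card - kr + (A ∩ β).card)
          ((kc : ℤ) - β.card - ℓ + (A ∩ β).card) := by
  set a := (A ∩ β).card with hadef
  set b := β.card with hbdef
  have hΩ : (Finset.Icc 1 n).card = n := by simp
  -- basic card facts
  have haA : a ≤ kr := by
    rw [← hAcard]; exact Finset.card_le_card Finset.inter_subset_left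
  have haβ : a ≤ b := Finset.card_le_card Finset.inter_subset_right
  have hABsub : A ∪ β ⊆ Finset.Icc 1 n := Finset.union_subset hA hβ
  have hABcard : (A ∪ β).card + a = kr + b := by
    rw [hadef, ← hAcard, hbdef]; exact Finset.card_union_add_card_inter A β
  have hABn : (A ∪ β).card ≤ n := by rw [← hΩ]; exact Finset.card_le_card hABsub
  -- key cardinality facts for any T in the filter
  have hTfacts : ∀ T ∈ (Finset.Icc 1 n).powerset.filter fun T =>
      T.card = kc ∧ (A ∩ T).card = ℓ ∧ β ⊆ T, a ≤ ℓ ∧ b + ℓ ≤ kc + a := by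
    intro T hT
    simp only [Finset.mem_filter, Finset.mem_powerset] at hT
    obtain ⟨hTΩ, hTcard, hATcard, hβT⟩ := hT
    have h1 : A ∩ β ⊆ A ∩ T := Finset.inter_subset_inter Finset.Subset.rfl hβT
    have ha_le : a ≤ ℓ := by rw [← hATcard]; exact Finset.card_le_card h1
    have hinter : β ∩ (A ∩ T) = A ∩ β := by
      ext x
      simp only [Finset.mem_inter]
      constructor
      · tauto
      · rintro ⟨hxA, hxβ⟩; exact ⟨hxβ, hxA, hβT hxβ⟩
    have hcu : (β ∪ (A ∩ T)).card + a = b + ℓ := by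
      have := Finset.card_union_add_card_inter β (A ∩ T)
      rw [hinter] at this
      omega
    have hsubT : β ∪ (A ∩ T) ⊆ T := Finset.union_subset hβT Finset.inter_subset_right
    have := Finset.card_le_card hsubT
    omega
  by_cases hmain : a ≤ ℓ ∧ b + ℓ ≤ kc + a
  · obtain ⟨hm1, hm2⟩ := hmain
    set m1 := ℓ - a with hm1def
    set m2 := kc + a - (b + ℓ) with hm2def
    have hX : (A \ β).card = kr - a := by
      have := Finset.card_sdiff_add_card_inter A β
      omega
    have hY : ((Finset.Icc 1 n) \ (A ∪ β)).card = n - (kr + b - a) := by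
      rw [Finset.card_sdiff_of_subset hABsub, hΩ]
      omega
    have key : ((Finset.Icc 1 n).powerset.filter fun T =>
        T.card = kc ∧ (A ∩ T).card = ℓ ∧ β ⊆ T).card
        = ((A \ β).powersetCard m1 ×ˢ
            (((Finset.Icc 1 n) \ (A ∪ β)).powersetCard m2)).card := by
      apply Finset.card_bij' (fun T _ => (T ∩ (A \ β), T \ (A ∪ β)))
        (fun p _ => β ∪ p.1 ∪ p.2)
      · -- hi
        intro T hT
        simp only [Finset.mem_filter, Finset.mem_powerset] at hT
        obtain ⟨hTΩ, hTcard, hATcard, hβT⟩ := hT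
        simp only [Finset.mem_product, Finset.mem_powersetCard]
        refine ⟨⟨Finset.inter_subset_right, ?_⟩,
          Finset.sdiff_subset_sdiff hTΩ Finset.Subset.rfl, ?_⟩
        · have he : T ∩ (A \ β) = (A ∩ T) \ β := by
            ext x
            simp only [Finset.mem_inter, Finset.mem_sdiff]
            tauto
          have hinter : (A ∩ T) ∩ β = A ∩ β := by
            ext x
            simp only [Finset.mem_inter]
            constructor
            · tauto
            · rintro ⟨hxA, hxβ⟩; exact ⟨⟨hxA, hβT hxβ⟩, hxβ⟩
          have := Finset.card_sdiff_add_card_inter (A ∩ T) β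
          rw [hinter] at this
          rw [he]
          omega
        · have he : T ∩ (A ∪ β) = (A ∩ T) ∪ β := by
            ext x
            simp only [Finset.mem_inter, Finset.mem_union]
            constructor
            · tauto
            · rintro (⟨hxA, hxT⟩ | hxβ)
              · exact ⟨hxT, Or.inl hxA⟩
              · exact ⟨hβT hxβ, Or.inr hxβ⟩
          have hinter : (A ∩ T) ∩ β = A ∩ β := by
            ext x
            simp only [Finset.mem_inter]
            constructor
            · tauto
            · rintro ⟨hxA, hxβ⟩; exact ⟨⟨hxA, hβT hxβ⟩, hxβ⟩
          have h4 := Finset.card_union_add_card_inter (A ∩ T) β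
          rw [hinter] at h4
          have h5 := Finset.card_sdiff_add_card_inter T (A ∪ β)
          have h6 : T ∩ (A ∪ β) = (A ∩ T) ∪ β := he
          rw [h6] at h5
          omega
      · -- hj
        rintro ⟨S, U⟩ hp
        simp only [Finset.mem_product, Finset.mem_powersetCard] at hp
        obtain ⟨⟨hS, hScard⟩, hU, hUcard⟩ := hp
        have hSA : ∀ x ∈ S, x ∈ A ∧ x ∉ β := by
          intro x hx
          have := hS hx
          simpa [Finset.mem_sdiff] using this
        have hUm : ∀ x ∈ U, x ∈ Finset.Icc 1 n ∧ x ∉ A ∧ x ∉ β := by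
          intro x hx
          have := hU hx
          simp only [Finset.mem_sdiff, Finset.mem_union] at this
          tauto
        simp only [Finset.mem_filter, Finset.mem_powerset]
        have hd1 : Disjoint β S := by
          rw [Finset.disjoint_right]
          intro x hx
          exact (hSA x hx).2
        have hd2 : Disjoint (β ∪ S) U := by
          rw [Finset.disjoint_left]
          intro x hx
          simp only [Finset.mem_union] at hx
          intro hxU
          rcases hx with h | h
          · exact (hUm x hxU).2.2 h
          · exact (hUm x hxU).2.1 (hSA x h).1
        refine ⟨?_, ?_, ?_, ?_⟩
        · refine Finset.union_subset (Finset.union_subset hβ ?_) ?_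
          · exact fun x hx => hA (hSA x hx).1
          · exact fun x hx => (hUm x hx).1
        · rw [Finset.card_union_of_disjoint hd2, Finset.card_union_of_disjoint hd1]
          omega
        · have he : A ∩ (β ∪ S ∪ U) = (A ∩ β) ∪ S := by
            ext x
            simp only [Finset.mem_inter, Finset.mem_union]
            constructor
            · rintro ⟨hxA, (hxβ | hxS) | hxU⟩
              · exact Or.inl ⟨hxA, hxβ⟩
              · exact Or.inr hxS
              · exact absurd hxA (hUm x hxU).2.1
            · rintro (⟨hxA, hxβ⟩ | hxS)
              · exact ⟨hxA, Or.inl (Or.inl hxβ)⟩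
              · exact ⟨(hSA x hxS).1, Or.inl (Or.inr hxS)⟩
          have hd3 : Disjoint (A ∩ β) S := by
            rw [Finset.disjoint_right]
            intro x hx
            simp only [Finset.mem_inter]
            intro h
            exact (hSA x hx).2 h.2
          rw [he, Finset.card_union_of_disjoint hd3]
          omega
        · exact (Finset.subset_union_left).trans Finset.subset_union_left
      · -- left_inv
        intro T hT
        simp only [Finset.mem_filter, Finset.mem_powerset] at hT
        obtain ⟨hTΩ, hTcard, hATcard, hβT⟩ := hT
        ext x
        simp only [Finset.mem_union, Finset.mem_inter, Finset.mem_sdiff]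
        constructor
        · rintro ((h | h) | h)
          · exact hβT h
          · exact h.1
          · exact h.1
        · intro hxT
          by_cases hxA : x ∈ A
          · by_cases hxβ : x ∈ β
            · exact Or.inl (Or.inl hxβ)
            · exact Or.inl (Or.inr ⟨hxT, hxA, hxβ⟩)
          · by_cases hxβ : x ∈ β
            · exact Or.inl (Or.inl hxβ)
            · exact Or.inr ⟨hxT, by simp [hxA, hxβ]⟩
      · -- right_inv
        rintro ⟨S, U⟩ hp
        simp only [Finset.mem_product, Finset.mem_powersetCard] at hp
        obtain ⟨⟨hS, hScard⟩, hU, hUcard⟩ := hp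
        have hSA : ∀ x ∈ S, x ∈ A ∧ x ∉ β := by
          intro x hx
          have := hS hx
          simpa [Finset.mem_sdiff] using this
        have hUm : ∀ x ∈ U, x ∈ Finset.Icc 1 n ∧ x ∉ A ∧ x ∉ β := by
          intro x hx
          have := hU hx
          simp only [Finset.mem_sdiff, Finset.mem_union] at this
          tauto
        simp only [Prod.mk.injEq]
        constructor
        · ext x
          simp only [Finset.mem_inter, Finset.mem_union, Finset.mem_sdiff]
          constructor
          · rintro ⟨(hxβ | hxS) | hxU, hxA, hxnβ⟩
            · exact absurd hxβ hxnβ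
            · exact hxS
            · exact absurd hxA (hUm x hxU).2.1
          · intro hxS
            exact ⟨Or.inl (Or.inr hxS), (hSA x hxS).1, (hSA x hxS).2⟩
        · ext x
          simp only [Finset.mem_sdiff, Finset.mem_union]
          constructor
          · rintro ⟨(hxβ | hxS) | hxU, hn⟩
            · exact absurd (Or.inr hxβ) hn
            · exact absurd (Or.inl (hSA x hxS).1) hn
            · exact hxU
          · intro hxU
            refine ⟨Or.inr hxU, ?_⟩
            rintro (h | h)
            · exact (hUm x hxU).2.1 h
            · exact (hUm x hxU).2.2 h
    rw [key, Finset.card_product, Finset.card_powersetCard, Finset.card_powersetCard,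
      hX, hY]
    have hC1 : C ((kr : ℤ) - a) ((ℓ : ℤ) - a) = ((kr - a).choose m1 : ℤ) := by
      have e1 : ((kr : ℤ) - a).toNat = kr - a := by omega
      have e2 : ((ℓ : ℤ) - a).toNat = m1 := by omega
      rw [C_eq_choose _ _ (by omega) (by omega), e1, e2]
    have hC2 : C ((n : ℤ) - b - kr + a) ((kc : ℤ) - b - ℓ + a)
        = ((n - (kr + b - a)).choose m2 : ℤ) := by
      have e1 : ((n : ℤ) - b - kr + a).toNat = n - (kr + b - a) := by omega
      have e2 : ((kc : ℤ) - b - ℓ + a).toNat = m2 := by omega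
      rw [C_eq_choose _ _ (by omega) (by omega), e1, e2]
    rw [hC1, hC2]
    push_cast
    ring
  · -- degenerate case: both sides are zero
    have hempty : ((Finset.Icc 1 n).powerset.filter fun T =>
        T.card = kc ∧ (A ∩ T).card = ℓ ∧ β ⊆ T) = ∅ := by
      rw [Finset.eq_empty_iff_forall_notMem]
      intro T hT
      exact hmain (hTfacts T hT)
    rw [hempty]
    have hz : C ((kr : ℤ) - a) ((ℓ : ℤ) - a) *
        C ((n : ℤ) - b - kr + a) ((kc : ℤ) - b - ℓ + a) = 0 := by
      rcases not_and_or.mp hmain with h | h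
      · have : C ((kr : ℤ) - a) ((ℓ : ℤ) - a) = 0 := by
          unfold C
          rw [if_neg]
          omega
        rw [this, zero_mul]
      · have : C ((n : ℤ) - b - kr + a) ((kc : ℤ) - b - ℓ + a) = 0 := by
          unfold C
          rw [if_neg]
          omega
        rw [this, mul_zero]
    rw [hz]
    simp
end

section
/- Let 0 ≤ ℓ ≤ k_r ≤ k_c ≤ n be integers with n ≥ k_r + k_c. Let U be the integer matrix with rows indexed by the standard subsets α of {1,…,n} of size at most k_r and columns indexed by the standard subsets β of size at most k_c, with entries U(α,β) = f_{|α|}(|β|; n, k_r, k_c, ℓ) if α ⊆ β and U(α,β) = 0 otherwise. Then A_{n,k_r,k_c,ℓ} · P_{k_c} = P_{k_r} · U. -/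
open scoped Classical

/-- The `k`-element subsets of `{1,…,n}`. -/
def ksubsets (n k : ℕ) : Finset (Finset ℕ) :=
  (Finset.Icc 1 n).powerset.filter fun A => A.card = k

/-- The subset intersection matrix `A_{n,kr,kc,ℓ}`. -/
noncomputable def interMat (n kr kc ℓ : ℕ) :
    Matrix ↥(ksubsets n kr) ↥(ksubsets n kc) ℤ :=
  Matrix.of fun A B => if ((A : Finset ℕ) ∩ (B : Finset ℕ)).card = ℓ then 1 else 0

/-- The Bier matrix `P_k`, rows indexed by `k`-subsets, columns by standard `(≤ k)`-subsets. -/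
noncomputable def P (n k : ℕ) : Matrix ↥(ksubsets n k) ↥(stdLe n k) ℤ :=
  Matrix.of fun A β => if (β : Finset ℕ) ⊆ (A : Finset ℕ) then 1 else 0

/-- `f_i(j; n, kr, kc, ℓ)`. -/
noncomputable def f (n kr kc ℓ i j : ℕ) : ℤ :=
  ∑ v ∈ Finset.range (i + 1),
    (-1 : ℤ) ^ (i + v) * (i.choose v) *
      (C ((kr : ℤ) - v) ((ℓ : ℤ) - v) * C ((n : ℤ) - kr - j + v) ((kc : ℤ) - ℓ - j + v))

/-- The upper triangular matrix `U` with `(α,β)` entry `f_{|α|}(|β|)` when `α ⊆ β`. -/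
noncomputable def U (n kr kc ℓ : ℕ) : Matrix ↥(stdLe n kr) ↥(stdLe n kc) ℤ :=
  Matrix.of fun α β =>
    if (α : Finset ℕ) ⊆ (β : Finset ℕ) then
      f n kr kc ℓ (α : Finset ℕ).card (β : Finset ℕ).card
    else 0


open Finset in

lemma getD_le_iff_countP {l : List ℕ} (hl : l.Pairwise (· < ·)) {i : ℕ} (hi : i < l.length) (x : ℕ) :
    l.getD i 0 ≤ x ↔ i + 1 ≤ l.countP (· ≤ x) := by
  have hmono : ∀ (a b : ℕ) (ha : a < l.length) (hb : b < l.length), a ≤ b →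
      l[a]'ha ≤ l[b]'hb := by
    intro a b ha hb hab
    rcases Nat.lt_or_ge a b with h | h
    · exact le_of_lt (List.Pairwise.rel_get_of_lt hl (a := ⟨a, ha⟩) (b := ⟨b, hb⟩) h)
    · have : a = b := le_antisymm hab h
      subst this; exact le_rfl
  rw [List.getD_eq_getElem l 0 hi]
  constructor
  · intro h
    have hsplit : l.countP (· ≤ x) =
        (l.take (i+1)).countP (· ≤ x) + (l.drop (i+1)).countP (· ≤ x) := by
      conv_lhs => rw [← List.take_append_drop (i+1) l]
      rw [List.countP_append]
    have htake : (l.take (i+1)).countP (· ≤ x) = (l.take (i+1)).length := by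
      apply List.countP_eq_length.2
      intro a ha
      obtain ⟨k, hk, rfl⟩ := List.mem_iff_getElem.1 ha
      rw [List.getElem_take]
      have hk' : k < l.length := lt_of_lt_of_le hk (by simp [List.length_take])
      simp only [decide_eq_true_eq]
      have hki : k ≤ i := by
        have := hk; simp [List.length_take] at this; omega
      exact le_trans (hmono k i hk' hi hki) h
    have : (l.take (i+1)).length = i + 1 := by simp [List.length_take]; omega
    omega
  · intro h
    by_contra hc
    push_neg at hc
    have hsplit : l.countP (· ≤ x) =
        (l.take i).countP (· ≤ x) + (l.drop i).countP (· ≤ x) := by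
      conv_lhs => rw [← List.take_append_drop i l]
      rw [List.countP_append]
    have hdrop : (l.drop i).countP (· ≤ x) = 0 := by
      apply List.countP_eq_zero.2
      intro a ha
      obtain ⟨k, hk, rfl⟩ := List.mem_iff_getElem.1 ha
      rw [List.getElem_drop]
      simp only [decide_eq_true_eq, not_le]
      have hk' : i + k < l.length := by simp [List.length_drop] at hk; omega
      exact lt_of_lt_of_le hc (hmono i (i+k) hi hk' (by omega))
    have htake : (l.take i).countP (· ≤ x) ≤ i := le_trans List.countP_le_length (by simp)
    omega

open Finset in

lemma card_filter_eq_countP (s : Finset ℕ) (p : ℕ → Prop) [DecidablePred p] :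
    (s.filter p).card = (s.sort (· ≤ ·)).countP (fun a => decide (p a)) := by
  have h := Finset.sort_eq s (· ≤ ·)
  rw [Finset.card_filter]
  calc (∑ a ∈ s, if p a then 1 else 0)
      = Multiset.countP p s.val := by
        rw [Multiset.countP_eq_card_filter]
        simp [Finset.sum_ite_eq, Finset.card_filter, Finset.filter]
    _ = (s.sort (· ≤ ·)).countP (fun a => decide (p a)) := by
        rw [← h]; rfl

open Finset in
lemma IsStandard.subset' {α β : Finset ℕ} (hβ : IsStandard β) (hsub : α ⊆ β) : IsStandard α := by
  intro i hi
  have hcard : α.card ≤ β.card := card_le_card hsub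
  have hib : i < (β.sort (· ≤ ·)).length := by rw [Finset.length_sort]; omega
  have hia : i < (α.sort (· ≤ ·)).length := by rw [Finset.length_sort]; exact hi
  set x := (α.sort (· ≤ ·)).getD i 0 with hx
  have h1 : i + 1 ≤ (α.sort (· ≤ ·)).countP (· ≤ x) :=
    (getD_le_iff_countP (Finset.sortedLT_sort α).pairwise hia x).1 le_rfl
  have h2 : (α.filter (· ≤ x)).card ≤ (β.filter (· ≤ x)).card :=
    card_le_card (filter_subset_filter _ hsub)
  rw [card_filter_eq_countP, card_filter_eq_countP] at h2
  have h3 : i + 1 ≤ (β.sort (· ≤ ·)).countP (· ≤ x) := by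
    refine le_trans h1 (le_trans (le_of_eq ?_) (le_trans h2 (le_of_eq ?_))) <;> rfl
  have h4 : (β.sort (· ≤ ·)).getD i 0 ≤ x :=
    (getD_le_iff_countP (Finset.sortedLT_sort β).pairwise hib x).2 h3
  exact le_trans (hβ i (by omega)) h4

open Finset in
lemma inversion (t : ℕ) (g : ℕ → ℤ) :
    ∑ s ∈ range (t+1), (t.choose s : ℤ) *
      ∑ v ∈ range (s+1), (-1 : ℤ)^(s+v) * (s.choose v : ℤ) * g v = g t := by
  have h1 : ∀ s ∈ range (t+1),
      (t.choose s : ℤ) * ∑ v ∈ range (s+1), (-1 : ℤ)^(s+v) * (s.choose v : ℤ) * g v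
        = ∑ v ∈ range (t+1), (t.choose s : ℤ) * ((-1 : ℤ)^(s+v) * (s.choose v : ℤ) * g v) := by
    intro s hs
    rw [mul_sum]
    apply Finset.sum_subset
    · apply Finset.range_subset_range.2
      simp only [mem_range] at hs; omega
    · intro v _ hv
      simp only [mem_range, not_lt] at hv
      have : s.choose v = 0 := Nat.choose_eq_zero_of_lt (by omega)
      simp [this]
  rw [Finset.sum_congr rfl h1, Finset.sum_comm]
  have h2 : ∀ v ∈ range (t+1),
      (∑ s ∈ range (t+1), (t.choose s : ℤ) * ((-1 : ℤ)^(s+v) * (s.choose v : ℤ) * g v))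
        = if v = t then g t else 0 := by
    intro v hv
    have hvt : v ≤ t := by simp only [mem_range] at hv; omega
    have hsub : Finset.Icc v t ⊆ range (t+1) := by
      intro s hs; simp only [mem_Icc] at hs; simp only [mem_range]; omega
    rw [← Finset.sum_subset hsub]
    · rw [show Finset.Icc v t = Finset.Ico v (t+1) by rw [Finset.Ico_add_one_right_eq_Icc],
        Finset.sum_Ico_eq_sum_range,
        show t + 1 - v = t - v + 1 by omega]
      have hterm : ∀ u ∈ range (t - v + 1),
          (t.choose (v+u) : ℤ) * ((-1 : ℤ)^((v+u)+v) * ((v+u).choose v : ℤ) * g v)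
            = ((t.choose v : ℤ) * g v) * ((-1 : ℤ)^u * ((t-v).choose u : ℤ)) := by
        intro u hu
        simp only [mem_range] at hu
        have hc : t.choose (v+u) * (v+u).choose v = t.choose v * (t-v).choose u := by
          have := Nat.choose_mul (n := t) (k := v+u) (s := v) (by omega)
          simpa [Nat.add_sub_cancel_left] using this
        have hsign : (-1 : ℤ)^((v+u)+v) = (-1 : ℤ)^u := by
          have : (v+u)+v = 2*v + u := by omega
          rw [this, pow_add, pow_mul]
          simp
        rw [hsign]
        have hc' : ((t.choose (v+u) : ℤ)) * ((v+u).choose v : ℤ)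
            = (t.choose v : ℤ) * ((t-v).choose u : ℤ) := by exact_mod_cast hc
        linear_combination ((-1:ℤ)^u * g v) * hc'
      rw [Finset.sum_congr rfl hterm, ← Finset.mul_sum]
      rw [Int.alternating_sum_range_choose]
      rcases eq_or_ne v t with h | h
      · simp [h]
      · have : t - v ≠ 0 := by omega
        simp [this, h]
    · intro s hs hns
      simp only [mem_range] at hs
      simp only [mem_Icc, not_and, not_le] at hns
      have : s < v := by omega
      have : s.choose v = 0 := Nat.choose_eq_zero_of_lt this
      simp [this]
  rw [Finset.sum_congr rfl h2, Finset.sum_ite_eq' (range (t+1)) t]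
  simp

open Finset in
lemma count_eq (n kr kc ℓ t j : ℕ) (A β : Finset ℕ)
    (hA : A ⊆ Finset.Icc 1 n) (hAc : A.card = kr)
    (hβn : β ⊆ Finset.Icc 1 n) (hβc : β.card = j)
    (ht : (A ∩ β).card = t)
    (h1 : ℓ ≤ kr) (h2 : kr ≤ kc) (h4 : kr + kc ≤ n)
    (htl : t ≤ ℓ) (hjl : j + ℓ ≤ kc + t) :
    ((ksubsets n kc).filter (fun B => (A ∩ B).card = ℓ ∧ β ⊆ B)).card
      = (kr - t).choose (ℓ - t) * ((n - kr) - (j - t)).choose ((kc - ℓ) - (j - t)) := by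
  classical
  have htj : t ≤ j := by rw [← ht, ← hβc]; exact card_le_card inter_subset_right
  have htkr : t ≤ kr := by rw [← ht, ← hAc]; exact card_le_card inter_subset_left
  have hAβ : (A \ β).card = kr - t := by
    have h := Finset.card_sdiff_add_card_inter A β
    omega
  have hUn : (A ∪ β).card = kr + j - t := by
    have h := Finset.card_union_add_card_inter A β
    omega
  have hIccc : (Finset.Icc 1 n).card = n := by rw [Nat.card_Icc]; omega
  have hcompl : ((Finset.Icc 1 n) \ (A ∪ β)).card = (n - kr) - (j - t) := by
    rw [Finset.card_sdiff_of_subset (Finset.union_subset hA hβn), hIccc, hUn]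
    have hun_le : kr + j - t ≤ n := by omega
    omega
  have hcard : ((ksubsets n kc).filter (fun B => (A ∩ B).card = ℓ ∧ β ⊆ B)).card
      = (((A \ β).powersetCard (ℓ - t)) ×ˢ
          (((Finset.Icc 1 n) \ (A ∪ β)).powersetCard ((kc - ℓ) - (j - t)))).card := by
    apply Finset.card_nbij' (i := fun B => ((A ∩ B) \ β, B \ (A ∪ β)))
      (j := fun p => β ∪ p.1 ∪ p.2)
    · intro B hB
      simp only [Finset.mem_coe, ksubsets, Finset.mem_filter, Finset.mem_powerset] at hB
      obtain ⟨⟨hBn, hBc⟩, hABl, hβB⟩ := hB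
      simp only [Finset.mem_coe, Finset.mem_product, Finset.mem_powersetCard]
      refine ⟨⟨?_, ?_⟩, ?_, ?_⟩
      · exact Finset.sdiff_subset_sdiff Finset.inter_subset_left (le_refl _)
      · have hsub : A ∩ β ⊆ A ∩ B := Finset.inter_subset_inter (le_refl _) hβB
        have heq : (A ∩ B) \ β = (A ∩ B) \ (A ∩ β) := by
          ext x; simp only [Finset.mem_sdiff, Finset.mem_inter]; tauto
        rw [heq, Finset.card_sdiff_of_subset hsub, hABl, ht]
      · exact Finset.sdiff_subset_sdiff hBn (le_refl _)
      · have hBcap : (B ∩ (A ∪ β)).card = ℓ + (j - t) := by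
          have heq : B ∩ (A ∪ β) = (A ∩ B) ∪ β := by
            ext x; simp only [Finset.mem_inter, Finset.mem_union]
            constructor
            · rintro ⟨hxB, hxA | hxβ⟩
              exacts [Or.inl ⟨hxA, hxB⟩, Or.inr hxβ]
            · rintro (⟨hxA, hxB⟩ | hxβ)
              exacts [⟨hxB, Or.inl hxA⟩, ⟨hβB hxβ, Or.inr hxβ⟩]
          have hcap : (A ∩ B) ∩ β = A ∩ β := by
            ext x; simp only [Finset.mem_inter]
            exact ⟨fun h => ⟨h.1.1, h.2⟩, fun h => ⟨⟨h.1, hβB h.2⟩, h.2⟩⟩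
          have hu := Finset.card_union_add_card_inter (A ∩ B) β
          rw [hcap, ht, hABl, hβc] at hu
          rw [heq]; omega
        have h := Finset.card_sdiff_add_card_inter B (A ∪ β)
        rw [hBcap, hBc] at h
        omega
    · rintro ⟨X, Y⟩ hp
      simp only [Finset.mem_coe, Finset.mem_product, Finset.mem_powersetCard] at hp
      obtain ⟨⟨hX, hXc⟩, hY, hYc⟩ := hp
      have hXA : ∀ x ∈ X, x ∈ A ∧ x ∉ β := by
        intro x hx; have := hX hx; simpa [Finset.mem_sdiff] using this
      have hYn : ∀ x ∈ Y, x ∈ Finset.Icc 1 n ∧ x ∉ A ∧ x ∉ β := by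
        intro x hx; have := hY hx
        simp only [Finset.mem_sdiff, Finset.mem_union] at this; tauto
      simp only [Finset.mem_coe, ksubsets, Finset.mem_filter, Finset.mem_powerset]
      have hd1 : Disjoint β X := by
        rw [Finset.disjoint_left]; intro x hx hx'; exact (hXA x hx').2 hx
      have hd2 : Disjoint (β ∪ X) Y := by
        rw [Finset.disjoint_left]; intro x hx hx'
        rcases Finset.mem_union.1 hx with h | h
        · exact (hYn x hx').2.2 h
        · exact (hYn x hx').2.1 (hXA x h).1
      refine ⟨⟨?_, ?_⟩, ?_, ?_⟩
      · refine Finset.union_subset (Finset.union_subset hβn ?_) ?_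
        · intro x hx; exact hA (hXA x hx).1
        · intro x hx; exact (hYn x hx).1
      · rw [Finset.card_union_of_disjoint hd2, Finset.card_union_of_disjoint hd1,
          hβc, hXc, hYc]
        omega
      · have heq : A ∩ (β ∪ X ∪ Y) = (A ∩ β) ∪ X := by
          ext x
          have h1 := hXA x
          have h2 := hYn x
          simp only [Finset.mem_inter, Finset.mem_union] at *
          tauto
        rw [heq, Finset.card_union_of_disjoint, ht, hXc]
        · omega
        · rw [Finset.disjoint_left]; intro x hx hx'
          exact (hXA x hx').2 (Finset.mem_inter.1 hx).2
      · exact (Finset.subset_union_left).trans Finset.subset_union_left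
    · intro B hB
      simp only [Finset.mem_coe, ksubsets, Finset.mem_filter, Finset.mem_powerset] at hB
      obtain ⟨⟨hBn, hBc⟩, hABl, hβB⟩ := hB
      ext x
      have hβB' := @hβB x
      simp only [Finset.mem_union, Finset.mem_sdiff, Finset.mem_inter]
      constructor
      · rintro ((h | h) | h)
        · exact hβB' h
        · exact h.1.2
        · exact h.1
      · intro hxB
        by_cases hxβ : x ∈ β
        · tauto
        · by_cases hxA : x ∈ A <;> tauto
    · rintro ⟨X, Y⟩ hp
      simp only [Finset.mem_coe, Finset.mem_product, Finset.mem_powersetCard] at hp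
      obtain ⟨⟨hX, hXc⟩, hY, hYc⟩ := hp
      have hXA : ∀ x ∈ X, x ∈ A ∧ x ∉ β := by
        intro x hx; have := hX hx; simpa [Finset.mem_sdiff] using this
      have hYn : ∀ x ∈ Y, x ∈ Finset.Icc 1 n ∧ x ∉ A ∧ x ∉ β := by
        intro x hx; have := hY hx
        simp only [Finset.mem_sdiff, Finset.mem_union] at this; tauto
      have e1 : (A ∩ (β ∪ X ∪ Y)) \ β = X := by
        ext x
        have h1 := hXA x
        have h2 := hYn x
        simp only [Finset.mem_sdiff, Finset.mem_inter, Finset.mem_union] at *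
        tauto
      have e2 : (β ∪ X ∪ Y) \ (A ∪ β) = Y := by
        ext x
        have h1 := hXA x
        have h2 := hYn x
        simp only [Finset.mem_sdiff, Finset.mem_union] at *
        tauto
      simp only [e1, e2]
  rw [hcard, Finset.card_product, Finset.card_powersetCard, Finset.card_powersetCard,
    hAβ, hcompl]

theorem statement4 (n kr kc ℓ : ℕ) (h1 : ℓ ≤ kr) (h2 : kr ≤ kc) (h3 : kc ≤ n)
    (h4 : kr + kc ≤ n) :
    interMat n kr kc ℓ * P n kc = P n kr * U n kr kc ℓ := by
  ext A β
  rw [Matrix.mul_apply, Matrix.mul_apply]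
  obtain ⟨A, hA⟩ := A
  obtain ⟨β, hβ⟩ := β
  have hA' := hA
  have hβ' := hβ
  simp only [ksubsets, stdLe, Finset.mem_filter, Finset.mem_powerset] at hA' hβ'
  obtain ⟨hAn, hAc⟩ := hA'
  obtain ⟨hβn, hβstd, hβk⟩ := hβ'
  simp only [interMat, P, U, Matrix.of_apply]
  -- LHS
  have lhs_eq : (∑ x : ↥(ksubsets n kc),
      (if ((A : Finset ℕ) ∩ (x : Finset ℕ)).card = ℓ then (1:ℤ) else 0) *
        (if (β : Finset ℕ) ⊆ (x : Finset ℕ) then (1:ℤ) else 0))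
      = (((ksubsets n kc).filter (fun B => (A ∩ B).card = ℓ ∧ β ⊆ B)).card : ℤ) := by
    rw [Finset.sum_coe_sort (ksubsets n kc)
      (fun B => (if (A ∩ B).card = ℓ then (1:ℤ) else 0) * (if β ⊆ B then (1:ℤ) else 0))]
    rw [Finset.card_filter]
    push_cast
    apply Finset.sum_congr rfl
    intro B _
    split_ifs with h h' h' <;> simp_all
  -- RHS
  have rhs_eq : (∑ x : ↥(stdLe n kr),
      (if (x : Finset ℕ) ⊆ (A : Finset ℕ) then (1:ℤ) else 0) *
        (if (x : Finset ℕ) ⊆ (β : Finset ℕ) then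
          f n kr kc ℓ (x : Finset ℕ).card β.card else 0))
      = C ((kr : ℤ) - (A ∩ β).card) ((ℓ : ℤ) - (A ∩ β).card) *
          C ((n : ℤ) - kr - β.card + (A ∩ β).card)
            ((kc : ℤ) - ℓ - β.card + (A ∩ β).card) := by
    rw [Finset.sum_coe_sort (stdLe n kr)
      (fun α => (if α ⊆ A then (1:ℤ) else 0) *
        (if α ⊆ β then f n kr kc ℓ α.card β.card else 0))]
    have step1 : ∑ α ∈ stdLe n kr,
        (if α ⊆ A then (1:ℤ) else 0) * (if α ⊆ β then f n kr kc ℓ α.card β.card else 0)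
        = ∑ α ∈ (stdLe n kr).filter (fun α => α ⊆ A ∧ α ⊆ β),
            f n kr kc ℓ α.card β.card := by
      rw [Finset.sum_filter]
      apply Finset.sum_congr rfl
      intro α _
      split_ifs with h h' h' <;> simp_all
    rw [step1]
    have hset : (stdLe n kr).filter (fun α => α ⊆ A ∧ α ⊆ β) = (A ∩ β).powerset := by
      ext α
      simp only [stdLe, Finset.mem_filter, Finset.mem_powerset, Finset.subset_inter_iff]
      constructor
      · rintro ⟨_, hA1, hβ1⟩; exact ⟨hA1, hβ1⟩
      · rintro ⟨hαA, hαβ⟩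
        refine ⟨⟨hαA.trans hAn, IsStandard.subset' hβstd hαβ, ?_⟩, hαA, hαβ⟩
        calc α.card ≤ A.card := Finset.card_le_card hαA
          _ = kr := hAc
    rw [hset, Finset.sum_powerset_apply_card (fun m => f n kr kc ℓ m β.card)]
    simp only [nsmul_eq_mul, f]
    exact inversion (A ∩ β).card
      (fun v => C ((kr : ℤ) - v) ((ℓ : ℤ) - v) *
        C ((n : ℤ) - kr - β.card + v) ((kc : ℤ) - ℓ - β.card + v))
  rw [lhs_eq, rhs_eq]
  set t := (A ∩ β).card with ht
  set j := β.card with hj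
  have htj : t ≤ j := by rw [ht, hj]; exact Finset.card_le_card Finset.inter_subset_right
  have htkr : t ≤ kr := by
    rw [ht, ← hAc]; exact Finset.card_le_card Finset.inter_subset_left
  have hjkc : j ≤ kc := by rw [hj]; exact hβk
  by_cases htl : t ≤ ℓ
  · by_cases hjl : j + ℓ ≤ kc + t
    · rw [count_eq n kr kc ℓ t j A β hAn hAc hβn hj.symm ht.symm h1 h2 h4 htl hjl]
      have e1 : ((kr : ℤ) - t).toNat = kr - t := by omega
      have e2 : ((ℓ : ℤ) - t).toNat = ℓ - t := by omega
      have e3 : ((n : ℤ) - kr - j + t).toNat = (n - kr) - (j - t) := by omega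
      have e4 : ((kc : ℤ) - ℓ - j + t).toNat = (kc - ℓ) - (j - t) := by omega
      have c1 : C ((kr : ℤ) - t) ((ℓ : ℤ) - t) = ((kr - t).choose (ℓ - t) : ℤ) := by
        simp only [C]
        rw [if_pos (by constructor <;> omega), e1, e2]
      have c2 : C ((n : ℤ) - kr - j + t) ((kc : ℤ) - ℓ - j + t)
          = (((n - kr) - (j - t)).choose ((kc - ℓ) - (j - t)) : ℤ) := by
        simp only [C]
        rw [if_pos (by constructor <;> omega), e3, e4]
      rw [c1, c2]
      push_cast
      ring
    · have hempty : ((ksubsets n kc).filter (fun B => (A ∩ B).card = ℓ ∧ β ⊆ B)) = ∅ := by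
        rw [Finset.filter_eq_empty_iff]
        rintro B hB ⟨hABl, hβB⟩
        simp only [ksubsets, Finset.mem_filter, Finset.mem_powerset] at hB
        obtain ⟨hBn, hBc⟩ := hB
        have e1 := Finset.card_sdiff_add_card_inter β A
        have e2 := Finset.card_sdiff_add_card_inter B A
        have e3 : (β ∩ A).card = t := by rw [Finset.inter_comm]
        have e4 : (B ∩ A).card = ℓ := by rw [Finset.inter_comm]; exact hABl
        have e5 : (β \ A).card ≤ (B \ A).card :=
          Finset.card_le_card (Finset.sdiff_subset_sdiff hβB (le_refl _))
        omega
      have c2 : C ((n : ℤ) - kr - j + t) ((kc : ℤ) - ℓ - j + t) = 0 := by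
        simp only [C]
        rw [if_neg]
        rintro ⟨hh, -⟩
        omega
      rw [hempty, c2]
      simp
  · have hempty : ((ksubsets n kc).filter (fun B => (A ∩ B).card = ℓ ∧ β ⊆ B)) = ∅ := by
      rw [Finset.filter_eq_empty_iff]
      rintro B hB ⟨hABl, hβB⟩
      have hsub : A ∩ β ⊆ A ∩ B := Finset.inter_subset_inter (le_refl _) hβB
      have := Finset.card_le_card hsub
      omega
    have c1 : C ((kr : ℤ) - t) ((ℓ : ℤ) - t) = 0 := by
      simp only [C]
      rw [if_neg]
      rintro ⟨hh, -⟩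
      omega
    rw [hempty, c1]
    simp
end

section
/- Let 0 ≤ s ≤ i ≤ j ≤ n be integers. Then the product of standard inclusion matrices satisfies W_{s,i} · W_{i,j} = C(j−s, i−s) · W_{s,j}. -/
open scoped Classical

lemma filter_le_kth (β : Finset ℕ) (k : ℕ) (hk : k < β.card) :
    (β.filter (· ≤ β.orderEmbOfFin rfl ⟨k, hk⟩)).card = k + 1 := by
  have himg : β.filter (· ≤ β.orderEmbOfFin rfl ⟨k, hk⟩) =
      Finset.image (fun i : Fin β.card => β.orderEmbOfFin rfl i)
        (Finset.univ.filter (fun i : Fin β.card => i.val ≤ k)) := by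
    ext y
    simp only [Finset.mem_filter, Finset.mem_image, Finset.mem_univ, true_and]
    constructor
    · rintro ⟨hy, hle⟩
      have : y ∈ Set.range (β.orderEmbOfFin rfl) := by
        rw [Finset.range_orderEmbOfFin]; exact hy
      obtain ⟨i, rfl⟩ := this
      refine ⟨i, ?_, rfl⟩
      have := (β.orderEmbOfFin rfl).le_iff_le.mp hle
      exact this
    · rintro ⟨i, hik, rfl⟩
      exact ⟨Finset.orderEmbOfFin_mem _ _ _, (β.orderEmbOfFin rfl).le_iff_le.mpr hik⟩
  rw [himg, Finset.card_image_of_injective _ (β.orderEmbOfFin rfl).injective]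
  have : Finset.univ.filter (fun i : Fin β.card => i.val ≤ k) = Finset.Iic ⟨k, hk⟩ := by
    ext i; simp [Fin.le_def]
  rw [this, Fin.card_Iic]

lemma kth_le_of_subset {γ β : Finset ℕ} (h : γ ⊆ β) {k : ℕ} (hkγ : k < γ.card)
    (hkβ : k < β.card) :
    β.orderEmbOfFin rfl ⟨k, hkβ⟩ ≤ γ.orderEmbOfFin rfl ⟨k, hkγ⟩ := by
  by_contra hlt
  push_neg at hlt
  set x := γ.orderEmbOfFin rfl ⟨k, hkγ⟩ with hx
  have h1 : (γ.filter (· ≤ x)).card = k + 1 := filter_le_kth γ k hkγ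
  have h2 : γ.filter (· ≤ x) ⊆ β.filter (· ≤ x) :=
    Finset.filter_subset_filter _ h
  have h3 : β.filter (· ≤ x) ⊆
      Finset.image (fun i : Fin β.card => β.orderEmbOfFin rfl i) (Finset.Iio ⟨k, hkβ⟩) := by
    intro y hy
    simp only [Finset.mem_filter] at hy
    obtain ⟨hyβ, hyx⟩ := hy
    have : y ∈ Set.range (β.orderEmbOfFin rfl) := by
      rw [Finset.range_orderEmbOfFin]; exact hyβ
    obtain ⟨i, rfl⟩ := this
    simp only [Finset.mem_image, Finset.mem_Iio]
    exact ⟨i, (β.orderEmbOfFin rfl).lt_iff_lt.mp (lt_of_le_of_lt hyx hlt), rfl⟩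
  have h4 := (Finset.card_le_card (h2.trans h3)).trans
    (Finset.card_image_le.trans (by rw [Fin.card_Iio]))
  simp only [Fin.val_mk] at h4
  omega

lemma isStandard_of_subset {γ β : Finset ℕ} (h : γ ⊆ β)
    (hβ : ∀ i < β.card, 2 * (i + 1) ≤ (β.sort (· ≤ ·)).getD i 0) :
    ∀ i < γ.card, 2 * (i + 1) ≤ (γ.sort (· ≤ ·)).getD i 0 := by
  intro k hk
  have hkβ : k < β.card := lt_of_lt_of_le hk (Finset.card_le_card h)
  have e1 : (γ.sort (· ≤ ·)).getD k 0 = γ.orderEmbOfFin rfl ⟨k, hk⟩ := by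
    rw [Finset.orderEmbOfFin_apply,
      List.getD_eq_getElem _ _ (by simpa using hk)]
    simp [Fin.getElem_fin]
  have e2 : (β.sort (· ≤ ·)).getD k 0 = β.orderEmbOfFin rfl ⟨k, hkβ⟩ := by
    rw [Finset.orderEmbOfFin_apply,
      List.getD_eq_getElem _ _ (by simpa using hkβ)]
    simp [Fin.getElem_fin]
  rw [e1]
  exact le_trans (e2 ▸ hβ k hkβ) (kth_le_of_subset h hk hkβ)

/-- The standard inclusion matrix `W_{i,j}` of standard `i`-subsets vs standard `j`-subsets. -/
noncomputable def W (n i j : ℕ) : Matrix ↥(stdSets n i) ↥(stdSets n j) ℤ :=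
  Matrix.of fun α β => if (α : Finset ℕ) ⊆ (β : Finset ℕ) then 1 else 0

theorem statement5 (n s i j : ℕ) (h1 : s ≤ i) (h2 : i ≤ j) (h3 : j ≤ n) :
    W n s i * W n i j = ((j - s).choose (i - s) : ℤ) • W n s j := by
  ext α β
  obtain ⟨α, hα⟩ := α
  obtain ⟨β, hβ⟩ := β
  simp only [stdSets, Finset.mem_filter, Finset.mem_powerset] at hα hβ
  obtain ⟨hαI, hαstd, hαcard⟩ := hα
  obtain ⟨hβI, hβstd, hβcard⟩ := hβ
  rw [Matrix.mul_apply]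
  simp only [W, Matrix.of_apply, Matrix.smul_apply, smul_eq_mul, mul_ite, mul_one, mul_zero,
    ite_mul, one_mul, zero_mul]
  rw [Finset.univ_eq_attach, Finset.sum_attach (stdSets n i)
    (fun γ => if γ ⊆ β then if α ⊆ γ then (1 : ℤ) else 0 else 0)]
  simp only [← ite_and]
  rw [Finset.sum_boole]
  by_cases hαβ : α ⊆ β
  · rw [if_pos hαβ]
    norm_cast
    have hcard : ((stdSets n i).filter (fun x => x ⊆ β ∧ α ⊆ x)).card =
        ((β \ α).powersetCard (i - s)).card := by
      apply Finset.card_bij' (fun γ _ => γ \ α) (fun δ _ => δ ∪ α)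
      · intro γ hγ
        simp only [Finset.mem_filter, stdSets, Finset.mem_powerset] at hγ
        obtain ⟨⟨_, _, hγc⟩, hγβ, hαγ⟩ := hγ
        rw [Finset.mem_powersetCard]
        exact ⟨Finset.sdiff_subset_sdiff hγβ le_rfl,
          by rw [Finset.card_sdiff_of_subset hαγ, hγc, hαcard]⟩
      · intro δ hδ
        rw [Finset.mem_powersetCard] at hδ
        obtain ⟨hδβα, hδc⟩ := hδ
        have hδβ : δ ⊆ β := hδβα.trans Finset.sdiff_subset
        have hdisj : Disjoint δ α := Finset.disjoint_of_subset_left hδβα Finset.sdiff_disjoint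
        have hsub : δ ∪ α ⊆ β := Finset.union_subset hδβ hαβ
        have hc : (δ ∪ α).card = i := by
          rw [Finset.card_union_of_disjoint hdisj, hδc, hαcard]
          omega
        simp only [Finset.mem_filter, stdSets, Finset.mem_powerset]
        exact ⟨⟨hsub.trans hβI, isStandard_of_subset hsub hβstd, hc⟩, hsub,
          Finset.subset_union_right⟩
      · intro γ hγ
        simp only [Finset.mem_filter] at hγ
        exact Finset.sdiff_union_of_subset hγ.2.2
      · intro δ hδ
        rw [Finset.mem_powersetCard] at hδ
        exact Finset.union_sdiff_cancel_right
          (Finset.disjoint_of_subset_left hδ.1 Finset.sdiff_disjoint)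
    rw [hcard, Finset.card_powersetCard, Finset.card_sdiff_of_subset hαβ, hαcard, hβcard]
  · rw [if_neg hαβ]
    rw [Finset.filter_false_of_mem, Finset.card_empty, Nat.cast_zero]
    intro x _
    rintro ⟨hxβ, hαx⟩
    exact hαβ (hαx.trans hxβ)
end

section
/- Let k ≥ 0 and n ≥ 3k − 1 be integers. Then the Smith group of the adjacency matrix of the Kneser graph satisfies S(A_{n,k,k,0}) ≅ ⊕_{j=0}^{k} (ℤ/C(n−k−j, k−j)ℤ)^{μ_j(n)}, where μ_j(n) = C(n,j) − C(n,j−1). In particular, the adjacency matrix of the Kneser graph has a diagonal form whose diagonal entries are C(n−k−j, k−j) with multiplicity μ_j(n) for 0 ≤ j ≤ k. -/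
open scoped Classical

/-- `μ_s(n) = C(n,s) − C(n,s−1)`. -/
noncomputable def mu (n : ℕ) (s : ℤ) : ℤ := C n s - C n (s - 1)

/-- The Smith group of an integer matrix. -/
abbrev SmithGroup {ρ γ : Type*} (M : Matrix ρ γ ℤ) : Type _ :=
  (γ → ℤ) ⧸ Submodule.span ℤ (Set.range fun r : ρ => M r)

namespace S14

open Finset

/-! ### Basic facts about `ksubsets` -/

lemma mem_ksubsets {n s : ℕ} {A : Finset ℕ} :
    A ∈ ksubsets n s ↔ A ⊆ Finset.Icc 1 n ∧ A.card = s := by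
  simp [ksubsets]

lemma ksubsets_zero (n : ℕ) : ksubsets n 0 = {∅} := by
  ext A
  simp only [mem_ksubsets, Finset.card_eq_zero, Finset.mem_singleton]
  exact ⟨fun h => h.2, fun h => ⟨h ▸ Finset.empty_subset _, h⟩⟩

lemma ksubsets_of_gt {n s : ℕ} (h : n < s) : ksubsets n s = ∅ := by
  ext A
  simp only [mem_ksubsets, Finset.notMem_empty, iff_false, not_and]
  intro hsub hcard
  have := Finset.card_le_card hsub
  rw [hcard, Nat.card_Icc] at this
  omega

lemma eq_empty_of_mem_ksubsets_zero {n : ℕ} {A : Finset ℕ} (h : A ∈ ksubsets n 0) :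
    A = ∅ := by
  have := (mem_ksubsets.mp h).2
  exact Finset.card_eq_zero.mp this

lemma not_mem_ksubsets_of_gt {n s : ℕ} {A : Finset ℕ} (h : n < s) : A ∉ ksubsets n s := by
  intro hA
  obtain ⟨h1, h2⟩ := mem_ksubsets.mp hA
  have := Finset.card_le_card h1
  rw [h2, Nat.card_Icc] at this
  omega

lemma card_ksubsets (n s : ℕ) : (ksubsets n s).card = n.choose s := by
  have : ksubsets n s = (Finset.Icc 1 n).powersetCard s := by
    rw [Finset.powersetCard_eq_filter]; rfl
  rw [this, Finset.card_powersetCard, Nat.card_Icc]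
  norm_num

/-! ### Standard sets -/

def stdCond (n : ℕ) (S : Finset ℕ) : Prop :=
  ∀ m ∈ Finset.range (n+1), 2 * (S.filter (· ≤ m)).card ≤ m

noncomputable def std (n i : ℕ) : Finset (Finset ℕ) :=
  (ksubsets n i).filter (stdCond n)

lemma std_subset_ksubsets {n i : ℕ} : std n i ⊆ ksubsets n i :=
  Finset.filter_subset _ _

lemma mem_std {n i S} (hS : S ∈ std n i) :
    S ⊆ Finset.Icc 1 n ∧ S.card = i ∧ stdCond n S := by
  simp only [std, Finset.mem_filter, mem_ksubsets] at hS
  exact ⟨hS.1.1, hS.1.2, hS.2⟩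

lemma std_zero (n : ℕ) : std n 0 = {∅} := by
  ext A
  simp only [std, Finset.mem_filter, ksubsets_zero, Finset.mem_singleton]
  constructor
  · exact fun h => h.1
  · rintro rfl
    refine ⟨rfl, fun m _ => by simp⟩

lemma std_of_gt {n i : ℕ} (h : n < 2 * i) : std n i = ∅ := by
  ext A
  simp only [std, Finset.mem_filter, Finset.notMem_empty, iff_false, not_and, mem_ksubsets]
  intro hA hc
  have hfil : A.filter (· ≤ n) = A := by
    apply Finset.filter_true_of_mem
    intro x hx
    exact (Finset.mem_Icc.mp (hA.1 hx)).2
  have := hc n (by simp)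
  rw [hfil, hA.2] at this
  omega

lemma not_mem_top {n : ℕ} {S : Finset ℕ} (hS : S ⊆ Finset.Icc 1 n) : (n+1) ∉ S := by
  intro h
  have := Finset.mem_Icc.mp (hS h)
  omega

lemma filter_all {n m : ℕ} {S : Finset ℕ} (hS : S ⊆ Finset.Icc 1 n) (h : n ≤ m) :
    S.filter (· ≤ m) = S := by
  apply Finset.filter_true_of_mem
  intro x hx
  have := Finset.mem_Icc.mp (hS hx)
  omega

lemma std_mono {n i : ℕ} : std n i ⊆ std (n+1) i := by
  intro S hS
  obtain ⟨hsub, hcard, hcond⟩ := mem_std hS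
  simp only [std, Finset.mem_filter, mem_ksubsets]
  refine ⟨⟨hsub.trans (Finset.Icc_subset_Icc_right (by omega)), hcard⟩, ?_⟩
  intro m hm
  simp only [Finset.mem_range] at hm
  rcases Nat.lt_or_ge m (n+1) with h | h
  · exact hcond m (Finset.mem_range.mpr h)
  · rw [filter_all hsub (by omega)]
    have := hcond n (Finset.mem_range.mpr (by omega))
    rw [filter_all hsub (by omega)] at this
    omega

lemma insert_mem_std {n i : ℕ} {S : Finset ℕ} (hS : S ∈ std n i)
    (h2 : 2 * (i+1) ≤ n+1) : insert (n+1) S ∈ std (n+1) (i+1) := by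
  obtain ⟨hsub, hcard, hcond⟩ := mem_std hS
  have hnotmem := not_mem_top hsub
  simp only [std, Finset.mem_filter, mem_ksubsets]
  refine ⟨⟨?_, ?_⟩, ?_⟩
  · intro x hx
    rcases Finset.mem_insert.mp hx with rfl | hx
    · simp only [Finset.mem_Icc]; omega
    · exact (hsub.trans (Finset.Icc_subset_Icc_right (by omega))) hx
  · rw [Finset.card_insert_of_notMem hnotmem, hcard]
  · intro m hm
    simp only [Finset.mem_range] at hm
    rw [Finset.filter_insert]
    rcases Nat.lt_or_ge m (n+1) with h | h
    · rw [if_neg (by omega)]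
      exact hcond m (Finset.mem_range.mpr h)
    · have hm' : m = n + 1 := by omega
      rw [if_pos (by omega), filter_all hsub (by omega),
        Finset.card_insert_of_notMem hnotmem, hcard]
      omega

lemma std_succ_eq {n i : ℕ} (hi : 1 ≤ i) (h2 : 2 * i ≤ n + 1) :
    std (n+1) i = std n i ∪ (std n (i-1)).image (insert (n+1)) := by
  ext S
  simp only [Finset.mem_union, Finset.mem_image]
  constructor
  · intro hS
    obtain ⟨hsub, hcard, hcond⟩ := mem_std hS
    by_cases hn1 : (n+1) ∈ S
    · right
      refine ⟨S.erase (n+1), ?_, Finset.insert_erase hn1⟩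
      simp only [std, Finset.mem_filter, mem_ksubsets]
      refine ⟨⟨?_, ?_⟩, ?_⟩
      · intro x hx
        obtain ⟨hne, hxS⟩ := Finset.mem_erase.mp hx
        have := Finset.mem_Icc.mp (hsub hxS)
        simp only [Finset.mem_Icc]; omega
      · rw [Finset.card_erase_of_mem hn1, hcard]
      · intro m hm
        simp only [Finset.mem_range] at hm
        have : (S.erase (n+1)).filter (· ≤ m) = S.filter (· ≤ m) := by
          rw [Finset.filter_erase, Finset.erase_eq_of_notMem]
          intro hmem
          have := (Finset.mem_filter.mp hmem).2
          omega
        rw [this]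
        exact hcond m (Finset.mem_range.mpr (by omega))
    · left
      simp only [std, Finset.mem_filter, mem_ksubsets]
      refine ⟨⟨?_, hcard⟩, ?_⟩
      · intro x hx
        have := Finset.mem_Icc.mp (hsub hx)
        have hne : x ≠ n + 1 := fun h => hn1 (h ▸ hx)
        simp only [Finset.mem_Icc]; omega
      · intro m hm
        simp only [Finset.mem_range] at hm
        exact hcond m (Finset.mem_range.mpr (by omega))
  · rintro (hS | ⟨T, hT, rfl⟩)
    · exact std_mono hS
    · have hi1 : i - 1 + 1 = i := by omega
      have h := insert_mem_std hT (by omega)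
      rwa [hi1] at h

lemma C_natCast (a b : ℕ) : C (a:ℤ) (b:ℤ) = (a.choose b : ℤ) := by
  unfold C
  split_ifs with h
  · simp
  · push_neg at h
    have hb : a < b := by
      have h0 : (0:ℤ) ≤ (b:ℤ) := Int.natCast_nonneg b
      have := h h0
      exact_mod_cast this
    rw [Nat.choose_eq_zero_of_lt hb]
    simp

lemma C_neg {x y : ℤ} (h : y < 0) : C x y = 0 := by
  unfold C
  rw [if_neg (by omega)]

lemma mu_zero (n : ℕ) : mu n 0 = 1 := by
  have h1 : C (n:ℤ) 0 = 1 := by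
    unfold C
    rw [if_pos ⟨le_refl 0, Int.natCast_nonneg n⟩]
    simp
  have h2 : C (n:ℤ) ((0:ℤ)-1) = 0 := C_neg (by norm_num)
  unfold mu
  rw [h1, h2]
  ring

lemma mu_natCast (n i : ℕ) (hi : 1 ≤ i) :
    mu n i = (n.choose i : ℤ) - (n.choose (i-1) : ℤ) := by
  unfold mu
  have h1 : ((i:ℤ) - 1) = ((i - 1 : ℕ) : ℤ) := by push_cast; omega
  rw [h1, C_natCast, C_natCast]

lemma card_std {n i : ℕ} (h2 : 2 * i ≤ n + 1) :
    ((std n i).card : ℤ) = mu n i := by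
  induction n generalizing i with
  | zero =>
    have : i = 0 := by omega
    subst this
    rw [std_zero]
    simp [mu_zero]
  | succ n IH =>
    rcases Nat.eq_zero_or_pos i with rfl | hi
    · rw [std_zero]; simp [mu_zero]
    · by_cases h2' : 2 * i ≤ n + 1
      · rw [std_succ_eq hi h2']
        have hdisj : Disjoint (std n i) ((std n (i-1)).image (insert (n+1))) := by
          rw [Finset.disjoint_right]
          rintro S hmem hmem'
          obtain ⟨T, hT, rfl⟩ := Finset.mem_image.mp hmem
          have hsub := (mem_std hmem').1
          exact not_mem_top hsub (Finset.mem_insert_self _ _)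
        rw [Finset.card_union_of_disjoint hdisj]
        have hinj : ((std n (i-1)).image (insert (n+1))).card = (std n (i-1)).card := by
          apply Finset.card_image_of_injOn
          intro T hT T' hT' hTT'
          have h1 := not_mem_top (mem_std hT).1
          have h2 := not_mem_top (mem_std hT').1
          have : (insert (n+1) T).erase (n+1) = (insert (n+1) T').erase (n+1) := by rw [hTT']
          rwa [Finset.erase_insert h1, Finset.erase_insert h2] at this
        rw [hinj]
        push_cast
        rw [IH h2', IH (by omega)]
        obtain ⟨j, rfl⟩ : ∃ j, i = j + 1 := ⟨i - 1, by omega⟩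
        simp only [Nat.add_sub_cancel]
        rw [mu_natCast n (j+1) (by omega), mu_natCast (n+1) (j+1) (by omega)]
        simp only [Nat.add_sub_cancel]
        rw [Nat.choose_succ_succ' n j]
        rcases Nat.eq_zero_or_pos j with rfl | hj1
        · rw [show ((0:ℕ):ℤ) = (0:ℤ) from rfl, mu_zero]
          simp only [Nat.choose_zero_right]
          push_cast
          ring
        · rw [mu_natCast n j hj1]
          obtain ⟨j', rfl⟩ : ∃ j', j = j' + 1 := ⟨j - 1, by omega⟩
          simp only [Nat.add_sub_cancel]
          rw [Nat.choose_succ_succ' n j']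
          push_cast
          ring
      · have hn2 : 2 * i = n + 2 := by omega
        rw [std_of_gt (by omega)]
        rw [mu_natCast _ _ hi]
        have hcc : (n+1).choose i = (n+1).choose (i-1) := by
          have h3 : i ≤ n + 1 := by omega
          have h4 : (n+1) - i = i - 1 := by omega
          rw [← h4, Nat.choose_symm h3]
        rw [hcc]
        simp

/-- telescoping sum -/
lemma sum_card_std {n k : ℕ} (h2 : 2 * k ≤ n + 1) :
    (∑ i ∈ Finset.range (k+1), ((std n i).card : ℤ)) = (n.choose k : ℤ) := by
  induction k with
  | zero =>
    rw [Finset.sum_range_one, std_zero]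
    simp
  | succ k IH =>
    rw [Finset.sum_range_succ, IH (by omega), card_std h2,
      mu_natCast _ _ (by omega)]
    simp only [Nat.add_sub_cancel]
    ring

/-! ### The containment and disjointness vectors -/

noncomputable def wvec (n s : ℕ) (S : Finset ℕ) : ↥(ksubsets n s) → ℤ :=
  fun B => if S ⊆ (B : Finset ℕ) then 1 else 0

noncomputable def vvec (n s : ℕ) (S : Finset ℕ) : ↥(ksubsets n s) → ℤ :=
  fun B => if S ∩ (B : Finset ℕ) = ∅ then 1 else 0

/-- The set of containment vectors of standard sets of size `≤ d`. -/
def stdFam (n s d : ℕ) : Set ((↥(ksubsets n s)) → ℤ) :=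
  { f | ∃ i S, i ≤ d ∧ S ∈ std n i ∧ f = wvec n s S }

lemma mem_up {n s : ℕ} {B : Finset ℕ} (hB : B ∈ ksubsets n s) : B ∈ ksubsets (n+1) s := by
  rw [mem_ksubsets] at hB ⊢
  exact ⟨hB.1.trans (Finset.Icc_subset_Icc_right (by omega)), hB.2⟩

lemma mem_drop {n s : ℕ} {B : Finset ℕ} (hB : B ∈ ksubsets (n+1) s) (h : (n+1) ∉ B) :
    B ∈ ksubsets n s := by
  rw [mem_ksubsets] at hB ⊢
  refine ⟨?_, hB.2⟩
  intro x hx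
  have := Finset.mem_Icc.mp (hB.1 hx)
  have hne : x ≠ n + 1 := fun he => h (he ▸ hx)
  simp only [Finset.mem_Icc]
  omega

lemma mem_erase_top {n s : ℕ} {B : Finset ℕ} (hB : B ∈ ksubsets (n+1) s) (h : (n+1) ∈ B) :
    B.erase (n+1) ∈ ksubsets n (s-1) := by
  rw [mem_ksubsets] at hB ⊢
  constructor
  · intro x hx
    obtain ⟨hne, hxB⟩ := Finset.mem_erase.mp hx
    have := Finset.mem_Icc.mp (hB.1 hxB)
    simp only [Finset.mem_Icc]
    omega
  · rw [Finset.card_erase_of_mem h, hB.2]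

lemma mem_insert_top {n s : ℕ} {B : Finset ℕ} (hs : 1 ≤ s) (hB : B ∈ ksubsets n (s-1)) :
    insert (n+1) B ∈ ksubsets (n+1) s := by
  rw [mem_ksubsets] at hB ⊢
  have hnot := not_mem_top hB.1
  constructor
  · intro x hx
    rcases Finset.mem_insert.mp hx with rfl | hx
    · simp only [Finset.mem_Icc]; omega
    · exact (hB.1.trans (Finset.Icc_subset_Icc_right (by omega))) hx
  · rw [Finset.card_insert_of_notMem hnot, hB.2]
    omega

noncomputable def ext0 (n s : ℕ) : ((↥(ksubsets n s)) → ℤ) →ₗ[ℤ] ((↥(ksubsets (n+1) s)) → ℤ) where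
  toFun f := fun B => if h : (n+1) ∈ (B : Finset ℕ) then 0 else f ⟨B, mem_drop B.2 h⟩
  map_add' f g := by
    funext B
    by_cases h : (n+1) ∈ (B : Finset ℕ) <;> simp [h]
  map_smul' c f := by
    funext B
    by_cases h : (n+1) ∈ (B : Finset ℕ) <;> simp [h]

noncomputable def ext1 (n s : ℕ) : ((↥(ksubsets n (s-1))) → ℤ) →ₗ[ℤ] ((↥(ksubsets (n+1) s)) → ℤ) where
  toFun f := fun B => if h : (n+1) ∈ (B : Finset ℕ) then f ⟨(B : Finset ℕ).erase (n+1), mem_erase_top B.2 h⟩ else 0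
  map_add' f g := by
    funext B
    by_cases h : (n+1) ∈ (B : Finset ℕ) <;> simp [h]
  map_smul' c f := by
    funext B
    by_cases h : (n+1) ∈ (B : Finset ℕ) <;> simp [h]

lemma decomp {n s : ℕ} (hs : 1 ≤ s) (x : (↥(ksubsets (n+1) s)) → ℤ) :
    x = ext0 n s (fun B => x ⟨B, mem_up B.2⟩)
      + ext1 n s (fun B => x ⟨insert (n+1) (B : Finset ℕ), mem_insert_top hs B.2⟩) := by
  funext B
  simp only [ext0, ext1, LinearMap.coe_mk, AddHom.coe_mk, Pi.add_apply]
  by_cases h : (n+1) ∈ (B : Finset ℕ)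
  · rw [dif_pos h, dif_pos h, zero_add]
    exact (congrArg x (Subtype.ext (Finset.insert_erase h))).symm
  · rw [dif_neg h, dif_neg h, add_zero]

lemma wvec_zero {n s : ℕ} {S : Finset ℕ} (h : s < S.card) : wvec n s S = 0 := by
  funext B
  obtain ⟨hsub, hcard⟩ := mem_ksubsets.mp B.2
  have : ¬ S ⊆ (B : Finset ℕ) := by
    intro hc
    have := Finset.card_le_card hc
    omega
  simp [wvec, this]

lemma ext1_wvec {n s : ℕ} {S : Finset ℕ} (hS : S ⊆ Finset.Icc 1 n) :
    ext1 n s (wvec n (s-1) S) = wvec (n+1) s (insert (n+1) S) := by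
  have hnot := not_mem_top hS
  funext B
  simp only [ext1, wvec, LinearMap.coe_mk, AddHom.coe_mk]
  by_cases h : (n+1) ∈ (B : Finset ℕ)
  · rw [dif_pos h]
    have : S ⊆ (B : Finset ℕ).erase (n+1) ↔ insert (n+1) S ⊆ (B : Finset ℕ) := by
      constructor
      · intro hsub
        rw [Finset.insert_subset_iff]
        exact ⟨h, hsub.trans (Finset.erase_subset _ _)⟩
      · intro hsub x hx
        rw [Finset.mem_erase]
        exact ⟨fun he => hnot (he ▸ hx), hsub (Finset.mem_insert_of_mem hx)⟩
    by_cases h2 : S ⊆ (B : Finset ℕ).erase (n+1)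
    · rw [if_pos h2, if_pos (this.mp h2)]
    · rw [if_neg h2, if_neg (fun hc => h2 (this.mpr hc))]
  · rw [dif_neg h, if_neg]
    intro hc
    exact h (hc (Finset.mem_insert_self _ _))

lemma wvec_decomp {n s : ℕ} {S : Finset ℕ} (hS : S ⊆ Finset.Icc 1 n) :
    wvec (n+1) s S = ext0 n s (wvec n s S) + ext1 n s (wvec n (s-1) S) := by
  have hnot := not_mem_top hS
  funext B
  simp only [ext0, ext1, wvec, LinearMap.coe_mk, AddHom.coe_mk, Pi.add_apply]
  by_cases h : (n+1) ∈ (B : Finset ℕ)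
  · rw [dif_pos h, dif_pos h, zero_add]
    have : S ⊆ (B : Finset ℕ) ↔ S ⊆ (B : Finset ℕ).erase (n+1) := by
      constructor
      · intro hsub x hx
        rw [Finset.mem_erase]
        exact ⟨fun he => hnot (he ▸ hx), hsub hx⟩
      · intro hsub
        exact hsub.trans (Finset.erase_subset _ _)
    by_cases h2 : S ⊆ (B : Finset ℕ)
    · rw [if_pos h2, if_pos (this.mp h2)]
    · rw [if_neg h2, if_neg (fun hc => h2 (this.mpr hc))]
  · rw [dif_neg h, dif_neg h, add_zero]

/-- Key spanning lemma (Wilson). -/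
lemma span_stdFam : ∀ n s : ℕ,
    Submodule.span ℤ (stdFam n s (min s (n - s))) = ⊤ := by
  have hzero : ∀ n d : ℕ, Submodule.span ℤ (stdFam n 0 d) = ⊤ := by
    intro n d
    rw [eq_top_iff]
    intro x _
    have hmem : (∅ : Finset ℕ) ∈ ksubsets n 0 := by rw [ksubsets_zero]; simp
    have hx : x = x ⟨∅, hmem⟩ • wvec n 0 ∅ := by
      funext B
      have hB : B = ⟨∅, hmem⟩ := Subtype.ext (eq_empty_of_mem_ksubsets_zero B.2)
      rw [hB]
      simp [wvec]
    rw [hx]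
    refine Submodule.smul_mem _ _ (Submodule.subset_span ⟨0, ∅, Nat.zero_le d, ?_, rfl⟩)
    rw [std_zero]
    simp
  have hempty : ∀ n s d : ℕ, n < s → Submodule.span ℤ (stdFam n s d) = ⊤ := by
    intro n s d h
    rw [eq_top_iff]
    intro x _
    have : x = 0 := by
      funext B
      exact absurd B.2 (not_mem_ksubsets_of_gt h)
    rw [this]
    exact Submodule.zero_mem _
  intro n
  induction n with
  | zero =>
    intro s
    rcases Nat.eq_zero_or_pos s with rfl | hs
    · exact hzero 0 _
    · exact hempty 0 s _ (by omega)
  | succ n IH =>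
    intro s
    rcases Nat.eq_zero_or_pos s with rfl | hs
    · exact hzero (n+1) _
    rcases Nat.lt_or_ge (n+1) s with hbig | hsle
    · exact hempty (n+1) s _ hbig
    set d := min s (n + 1 - s) with hd
    have hsub1 : ∀ {i : ℕ} {S : Finset ℕ}, S ∈ std n i → S ⊆ Finset.Icc 1 n :=
      fun h => (mem_std h).1
    -- Step 1 : lower layers go in via rows containing n+1
    have step1 : ∀ i S, i + 1 ≤ d → S ∈ std n i →
        ext1 n s (wvec n (s-1) S) ∈ Submodule.span ℤ (stdFam (n+1) s d) := by
      intro i S h1 hS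
      rw [ext1_wvec (hsub1 hS)]
      exact Submodule.subset_span ⟨i+1, _, h1, insert_mem_std hS (by omega), rfl⟩
    -- Step 2 : ext0 parts of rows
    have step2 : ∀ i S, i ≤ d → (i + 1 ≤ d ∨ i = s) → S ∈ std n i →
        ext0 n s (wvec n s S) ∈ Submodule.span ℤ (stdFam (n+1) s d) := by
      intro i S hi halt hS
      have hrow : wvec (n+1) s S ∈ Submodule.span ℤ (stdFam (n+1) s d) :=
        Submodule.subset_span ⟨i, S, hi, std_mono hS, rfl⟩
      have heq : ext0 n s (wvec n s S) = wvec (n+1) s S - ext1 n s (wvec n (s-1) S) := by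
        rw [wvec_decomp (hsub1 hS)]
        exact (add_sub_cancel_right _ _).symm
      rw [heq]
      rcases halt with h1 | hstop
      · exact Submodule.sub_mem _ hrow (step1 i S h1 hS)
      · have hz : wvec n (s-1) S = 0 := wvec_zero (by rw [(mem_std hS).2.1]; omega)
        rw [hz, map_zero, sub_zero]
        exact hrow
    -- Step 3 : all needed ext1 parts
    have step3 : ∀ i S, i ≤ min (s-1) (n + 1 - s) → S ∈ std n i →
        ext1 n s (wvec n (s-1) S) ∈ Submodule.span ℤ (stdFam (n+1) s d) := by
      intro i S hi hS
      by_cases h1 : i + 1 ≤ d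
      · exact step1 i S h1 hS
      · have hieq : i = d := by omega
        have hmineq : min s (n - s) = d - 1 := by omega
        have hmap : ext0 n s (wvec n s S) ∈ Submodule.span ℤ (stdFam (n+1) s d) := by
          by_cases hsn : n < s
          · have hz : wvec n s S = 0 := by
              funext B
              exact absurd B.2 (not_mem_ksubsets_of_gt hsn)
            rw [hz, map_zero]
            exact Submodule.zero_mem _
          · have hx : wvec n s S ∈ Submodule.span ℤ (stdFam n s (min s (n - s))) := by
              rw [IH s]; trivial
            have h2 : Submodule.map (ext0 n s) (Submodule.span ℤ (stdFam n s (min s (n - s))))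
                ≤ Submodule.span ℤ (stdFam (n+1) s d) := by
              rw [Submodule.map_span_le]
              rintro f ⟨j, T, hj, hT, rfl⟩
              exact step2 j T (by omega) (Or.inl (by omega)) hT
            exact h2 ⟨_, hx, rfl⟩
        have heq : ext1 n s (wvec n (s-1) S) = wvec (n+1) s S - ext0 n s (wvec n s S) := by
          rw [wvec_decomp (hsub1 hS)]
          exact (add_sub_cancel_left _ _).symm
        rw [heq]
        exact Submodule.sub_mem _
          (Submodule.subset_span ⟨i, S, by omega, std_mono hS, rfl⟩) hmap
    -- Assembly
    rw [eq_top_iff]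
    intro x _
    rw [decomp hs x]
    apply Submodule.add_mem
    · by_cases hsn : n < s
      · have hz : (fun B : ↥(ksubsets n s) => x ⟨B, mem_up B.2⟩) = 0 := by
          funext B
          exact absurd B.2 (not_mem_ksubsets_of_gt hsn)
        rw [hz, map_zero]
        exact Submodule.zero_mem _
      · have hx0 : (fun B : ↥(ksubsets n s) => x ⟨B, mem_up B.2⟩)
            ∈ Submodule.span ℤ (stdFam n s (min s (n - s))) := by
          rw [IH s]; trivial
        have h2 : Submodule.map (ext0 n s) (Submodule.span ℤ (stdFam n s (min s (n - s))))
            ≤ Submodule.span ℤ (stdFam (n+1) s d) := by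
          rw [Submodule.map_span_le]
          rintro f ⟨j, T, hj, hT, rfl⟩
          by_cases hc : j + 1 ≤ d
          · exact step2 j T (by omega) (Or.inl hc) hT
          · exact step2 j T (by omega) (Or.inr (by omega)) hT
        exact h2 ⟨_, hx0, rfl⟩
    · have hx1 : (fun B : ↥(ksubsets n (s-1)) => x ⟨insert (n+1) (B : Finset ℕ), mem_insert_top hs B.2⟩)
          ∈ Submodule.span ℤ (stdFam n (s-1) (min (s-1) (n - (s-1)))) := by
        rw [IH (s-1)]; trivial
      have h2 : Submodule.map (ext1 n s) (Submodule.span ℤ (stdFam n (s-1) (min (s-1) (n - (s-1)))))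
          ≤ Submodule.span ℤ (stdFam (n+1) s d) := by
        rw [Submodule.map_span_le]
        rintro f ⟨j, T, hj, hT, rfl⟩
        exact step3 j T (by omega) hT
      exact h2 ⟨_, hx1, rfl⟩

/-! ### Counting lemma for the row combination identity -/

lemma count_key {n k i : ℕ} {S : Finset ℕ} (hik : i ≤ k)
    (hS : S ⊆ Finset.Icc 1 n) (hcard : S.card = i) (B' : ↥(ksubsets n k)) :
    ((ksubsets n k).filter (fun B => S ⊆ B ∧ B ∩ (B' : Finset ℕ) = ∅)).card
      = if S ∩ (B' : Finset ℕ) = ∅ then (n - k - i).choose (k - i) else 0 := by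
  obtain ⟨hB'sub, hB'card⟩ := mem_ksubsets.mp B'.2
  by_cases h : S ∩ (B' : Finset ℕ) = ∅
  · rw [if_pos h]
    have hSB'disj : Disjoint S (B' : Finset ℕ) := by
      rw [Finset.disjoint_iff_inter_eq_empty]; exact h
    have hkey : (ksubsets n k).filter (fun B => S ⊆ B ∧ B ∩ (B' : Finset ℕ) = ∅)
        = ((Finset.Icc 1 n \ (S ∪ (B' : Finset ℕ))).powersetCard (k - i)).image (fun T => S ∪ T) := by
      ext B
      simp only [Finset.mem_filter, mem_ksubsets, Finset.mem_image, Finset.mem_powersetCard]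
      constructor
      · rintro ⟨⟨hBsub, hBcard⟩, hSB, hBB'⟩
        refine ⟨B \ S, ⟨?_, ?_⟩, Finset.union_sdiff_of_subset hSB⟩
        · intro x hx
          obtain ⟨hxB, hxS⟩ := Finset.mem_sdiff.mp hx
          rw [Finset.mem_sdiff, Finset.mem_union]
          refine ⟨hBsub hxB, ?_⟩
          rintro (hxS' | hxB')
          · exact hxS hxS'
          · exact (Finset.notMem_empty x) (hBB' ▸ Finset.mem_inter.mpr ⟨hxB, hxB'⟩)
        · rw [Finset.card_sdiff_of_subset hSB, hBcard, hcard]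
      · rintro ⟨T, ⟨hTsub, hTcard⟩, rfl⟩
        have hTdisjS : Disjoint S T := by
          rw [Finset.disjoint_right]
          intro x hxT hxS
          have := Finset.mem_sdiff.mp (hTsub hxT)
          exact this.2 (Finset.mem_union.mpr (Or.inl hxS))
        refine ⟨⟨?_, ?_⟩, Finset.subset_union_left, ?_⟩
        · intro x hx
          rcases Finset.mem_union.mp hx with hxS | hxT
          · exact hS hxS
          · exact (Finset.mem_sdiff.mp (hTsub hxT)).1
        · rw [Finset.card_union_of_disjoint hTdisjS, hcard, hTcard]
          omega
        · rw [Finset.union_inter_distrib_right, h]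
          have : T ∩ (B' : Finset ℕ) = ∅ := by
            rw [← Finset.disjoint_iff_inter_eq_empty, Finset.disjoint_left]
            intro x hxT hxB'
            have := Finset.mem_sdiff.mp (hTsub hxT)
            exact this.2 (Finset.mem_union.mpr (Or.inr hxB'))
          rw [this]
          simp
    rw [hkey]
    rw [Finset.card_image_of_injOn, Finset.card_powersetCard]
    · congr 1
      rw [Finset.card_sdiff_of_subset, Nat.card_Icc, Finset.card_union_of_disjoint hSB'disj, hcard, hB'card]
      · omega
      · intro x hx
        rcases Finset.mem_union.mp hx with hxS | hxB'
        · exact hS hxS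
        · exact hB'sub hxB'
    · intro T hT T' hT' hTT'
      rw [Finset.mem_coe, Finset.mem_powersetCard] at hT hT'
      have dT : Disjoint S T := by
        rw [Finset.disjoint_right]
        intro x hxT hxS
        have := Finset.mem_sdiff.mp (hT.1 hxT)
        exact this.2 (Finset.mem_union.mpr (Or.inl hxS))
      have dT' : Disjoint S T' := by
        rw [Finset.disjoint_right]
        intro x hxT hxS
        have := Finset.mem_sdiff.mp (hT'.1 hxT)
        exact this.2 (Finset.mem_union.mpr (Or.inl hxS))
      have e1 : (S ∪ T) \ S = T := by
        rw [Finset.union_sdiff_left, Finset.sdiff_eq_self_iff_disjoint]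
        exact dT.symm
      have e2 : (S ∪ T') \ S = T' := by
        rw [Finset.union_sdiff_left, Finset.sdiff_eq_self_iff_disjoint]
        exact dT'.symm
      simp only at hTT'
      rw [← e1, ← e2, hTT']
  · rw [if_neg h]
    rw [Finset.card_eq_zero, Finset.filter_eq_empty_iff]
    intro B _
    rintro ⟨hSB, hBB'⟩
    apply h
    rw [← Finset.subset_empty, ← hBB']
    exact Finset.inter_subset_inter hSB (le_refl _)

/-! ### Assembly -/

abbrev dd (n k : ℕ) (i : Fin (k+1)) : ℕ := (n - k - (i : ℕ)).choose (k - (i : ℕ))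

abbrev idx (n k : ℕ) : Type := (i : Fin (k+1)) × ↥(std n (i : ℕ))

noncomputable def fam (n k : ℕ) : idx n k → (↥(ksubsets n k) → ℤ) :=
  fun σ => vvec n k (σ.2 : Finset ℕ)

lemma span_fam (n k : ℕ) (h2k : 2 * k ≤ n) :
    Submodule.span ℤ (Set.range (fam n k)) = ⊤ := by
  have hkn : k ≤ n := by omega
  have hc1 : ∀ B : Finset ℕ, B ∈ ksubsets n k → Finset.Icc 1 n \ B ∈ ksubsets n (n - k) := by
    intro B hB
    obtain ⟨h1, h2⟩ := mem_ksubsets.mp hB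
    refine mem_ksubsets.mpr ⟨Finset.sdiff_subset, ?_⟩
    rw [Finset.card_sdiff_of_subset h1, Nat.card_Icc, h2]
    omega
  have hc2 : ∀ D : Finset ℕ, D ∈ ksubsets n (n-k) → Finset.Icc 1 n \ D ∈ ksubsets n k := by
    intro D hD
    obtain ⟨h1, h2⟩ := mem_ksubsets.mp hD
    refine mem_ksubsets.mpr ⟨Finset.sdiff_subset, ?_⟩
    rw [Finset.card_sdiff_of_subset h1, Nat.card_Icc, h2]
    omega
  let e : ↥(ksubsets n k) ≃ ↥(ksubsets n (n-k)) :=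
  { toFun := fun B => ⟨Finset.Icc 1 n \ (B : Finset ℕ), hc1 _ B.2⟩
    invFun := fun D => ⟨Finset.Icc 1 n \ (D : Finset ℕ), hc2 _ D.2⟩
    left_inv := fun B => Subtype.ext (Finset.sdiff_sdiff_eq_self (mem_ksubsets.mp B.2).1)
    right_inv := fun D => Subtype.ext (Finset.sdiff_sdiff_eq_self (mem_ksubsets.mp D.2).1) }
  let L : ((↥(ksubsets n (n-k))) → ℤ) ≃ₗ[ℤ] ((↥(ksubsets n k)) → ℤ) :=
    LinearEquiv.funCongrLeft ℤ ℤ e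
  have hmin2 : min (n-k) (n - (n-k)) = k := by omega
  have htop := span_stdFam n (n-k)
  rw [hmin2] at htop
  rw [eq_top_iff]
  intro x _
  have hx : L.symm x ∈ Submodule.span ℤ (stdFam n (n-k) k) := by rw [htop]; trivial
  have hxx : x = L (L.symm x) := (L.apply_symm_apply x).symm
  rw [hxx]
  have hmaple : Submodule.map L.toLinearMap (Submodule.span ℤ (stdFam n (n-k) k))
      ≤ Submodule.span ℤ (Set.range (fam n k)) := by
    rw [Submodule.map_span_le]
    rintro f ⟨i, S, hi, hS, rfl⟩
    have hSsub := (mem_std hS).1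
    have heq : L.toLinearMap (wvec n (n-k) S) = vvec n k S := by
      funext B
      have h0 : L.toLinearMap (wvec n (n-k) S) B = wvec n (n-k) S (e B) := rfl
      rw [h0]
      simp only [wvec, vvec]
      have hiff : S ⊆ Finset.Icc 1 n \ (B : Finset ℕ) ↔ S ∩ (B : Finset ℕ) = ∅ := by
        rw [Finset.subset_sdiff, ← Finset.disjoint_iff_inter_eq_empty]
        exact and_iff_right hSsub
      exact if_congr hiff rfl rfl
    rw [heq]
    exact Submodule.subset_span ⟨⟨⟨i, by omega⟩, ⟨S, hS⟩⟩, rfl⟩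
  exact hmaple ⟨_, hx, rfl⟩

lemma card_idx (n k : ℕ) (h2k1 : 2 * k ≤ n + 1) (hkn : k ≤ n) :
    Fintype.card (idx n k) = Fintype.card ↥(ksubsets n k) := by
  have h1 : Fintype.card (idx n k) = ∑ i : Fin (k+1), (std n (i:ℕ)).card := by
    rw [Fintype.card_sigma]
    exact Finset.sum_congr rfl fun i _ => Fintype.card_coe _
  have h2 : ((∑ i : Fin (k+1), (std n (i:ℕ)).card : ℕ) : ℤ) = (n.choose k : ℤ) := by
    push_cast
    rw [Fin.sum_univ_eq_sum_range (fun i => ((std n i).card : ℤ)) (k+1)]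
    apply sum_card_std h2k1
  have h3 : Fintype.card ↥(ksubsets n k) = n.choose k := by
    rw [Fintype.card_coe, card_ksubsets]
  rw [h1, h3]
  exact_mod_cast h2

lemma exists_basis (n k : ℕ)
    (hspan : Submodule.span ℤ (Set.range (fam n k)) = ⊤)
    (hcard : Fintype.card (idx n k) = Fintype.card ↥(ksubsets n k)) :
    ∃ b : Module.Basis (idx n k) ℤ ((↥(ksubsets n k)) → ℤ), ∀ σ, b σ = fam n k σ := by
  set T' := Fintype.linearCombination ℤ (fam n k) with hT'
  have hsurj : Function.Surjective T' := by
    rw [← LinearMap.range_eq_top, eq_top_iff, ← hspan]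
    apply Submodule.span_le.mpr
    rintro _ ⟨σ, rfl⟩
    exact ⟨Pi.single σ 1, by rw [hT', Fintype.linearCombination_apply_single, one_smul]⟩
  let q : idx n k ≃ ↥(ksubsets n k) := Fintype.equivOfCardEq hcard
  let Lq : ((↥(ksubsets n k)) → ℤ) ≃ₗ[ℤ] ((idx n k) → ℤ) := LinearEquiv.funCongrLeft ℤ ℤ q
  let E : ((↥(ksubsets n k)) → ℤ) →ₗ[ℤ] ((↥(ksubsets n k)) → ℤ) := T' ∘ₗ Lq.toLinearMap
  have hEsurj : Function.Surjective E := by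
    intro y
    obtain ⟨z, hz⟩ := hsurj y
    exact ⟨Lq.symm z, by simp only [E, LinearMap.coe_comp, Function.comp_apply,
      LinearEquiv.coe_coe, Lq.apply_symm_apply, hz]⟩
  have hEinj : Function.Injective E :=
    IsNoetherian.injective_of_surjective_endomorphism E hEsurj
  have hT'inj : Function.Injective T' := by
    intro a b' hab
    have h1 : E (Lq.symm a) = E (Lq.symm b') := by
      simp only [E, LinearMap.coe_comp, Function.comp_apply, LinearEquiv.coe_coe,
        Lq.apply_symm_apply]
      exact hab
    exact Lq.symm.injective (hEinj h1)
  let LE := LinearEquiv.ofBijective T' ⟨hT'inj, hsurj⟩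
  refine ⟨(Pi.basisFun ℤ (idx n k)).map LE, fun σ => ?_⟩
  rw [Module.Basis.map_apply, Pi.basisFun_apply]
  show T' (Pi.single σ 1) = fam n k σ
  rw [hT', Fintype.linearCombination_apply_single, one_smul]

noncomputable def Psi (n k : ℕ) : ((↥(ksubsets n k)) → ℤ) →ₗ[ℤ] ((↥(ksubsets n k)) → ℤ) :=
  Fintype.linearCombination ℤ (fun B : ↥(ksubsets n k) => interMat n k k 0 B)

lemma key_comb (n k i : ℕ) (S : Finset ℕ) (hik : i ≤ k) (hS : S ∈ std n i) :
    Psi n k (wvec n k S) = (((n - k - i).choose (k - i) : ℕ) : ℤ) • vvec n k S := by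
  obtain ⟨hSsub, hScard, _⟩ := mem_std hS
  funext B'
  rw [Psi, Fintype.linearCombination_apply, Finset.sum_apply]
  have hterm : ∀ B : ↥(ksubsets n k),
      (wvec n k S B • interMat n k k 0 B) B'
        = (if S ⊆ (B : Finset ℕ) ∧ (B : Finset ℕ) ∩ (B' : Finset ℕ) = ∅ then (1:ℤ) else 0) := by
    intro B
    simp only [Pi.smul_apply, wvec, interMat, Matrix.of_apply, smul_eq_mul]
    by_cases h1 : S ⊆ (B : Finset ℕ) <;>
      by_cases h2 : (B : Finset ℕ) ∩ (B' : Finset ℕ) = ∅ <;>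
        simp [h1, h2, Finset.card_eq_zero]
  rw [Finset.sum_congr rfl (fun B _ => hterm B)]
  rw [Finset.sum_coe_sort (ksubsets n k)
    (fun A => if S ⊆ A ∧ A ∩ (B' : Finset ℕ) = ∅ then (1:ℤ) else 0)]
  rw [Finset.sum_boole]
  have hcnt := count_key hik hSsub hScard B'
  rw [Finset.filter_congr_decidable] at *
  rw [hcnt]
  simp only [Pi.smul_apply, vvec, smul_eq_mul]
  by_cases h : S ∩ (B' : Finset ℕ) = ∅ <;> simp [h]

lemma span_rows (n k : ℕ) (hn : 3 * k ≤ n + 1) :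
    Submodule.span ℤ (Set.range fun r : ↥(ksubsets n k) => interMat n k k 0 r)
      = Submodule.span ℤ (Set.range fun σ : idx n k => ((dd n k σ.1 : ℕ) : ℤ) • fam n k σ) := by
  have hmink : min k (n - k) = k := by omega
  apply le_antisymm
  · apply Submodule.span_le.mpr
    rintro _ ⟨r, rfl⟩
    rw [SetLike.mem_coe]
    show interMat n k k 0 r ∈ _
    have h1 : interMat n k k 0 r = Psi n k (Pi.single r 1) := by
      rw [Psi, Fintype.linearCombination_apply_single, one_smul]
    rw [h1]
    have h2 : Pi.single r (1:ℤ) ∈ Submodule.span ℤ (stdFam n k k) := by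
      have hh := span_stdFam n k
      rw [hmink] at hh
      rw [hh]; trivial
    have h3 : Submodule.map (Psi n k) (Submodule.span ℤ (stdFam n k k))
        ≤ Submodule.span ℤ (Set.range fun σ : idx n k => ((dd n k σ.1 : ℕ) : ℤ) • fam n k σ) := by
      rw [Submodule.map_span_le]
      rintro f ⟨i, S, hi, hS, rfl⟩
      rw [key_comb n k i S hi hS]
      exact Submodule.subset_span ⟨⟨⟨i, by omega⟩, ⟨S, hS⟩⟩, rfl⟩
    exact h3 ⟨_, h2, rfl⟩
  · apply Submodule.span_le.mpr
    rintro _ ⟨σ, rfl⟩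
    obtain ⟨i, S⟩ := σ
    rw [SetLike.mem_coe]
    show ((dd n k i : ℕ) : ℤ) • fam n k ⟨i, S⟩ ∈ _
    have h1 : ((dd n k i : ℕ) : ℤ) • fam n k ⟨i, S⟩ = Psi n k (wvec n k (S : Finset ℕ)) := by
      rw [key_comb n k (i : ℕ) (S : Finset ℕ) i.is_le S.2]
      rfl
    rw [h1, Psi, Fintype.linearCombination_apply]
    apply Submodule.sum_mem
    intro B _
    exact Submodule.smul_mem _ _ (Submodule.subset_span ⟨B, rfl⟩)

lemma span_single {ι : Type*} [Fintype ι] [DecidableEq ι] (c : ι → ℤ) :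
    Submodule.span ℤ (Set.range fun i => c i • Pi.single i (1:ℤ))
      = Submodule.pi Set.univ (fun i => Ideal.span {c i}) := by
  apply le_antisymm
  · rw [Submodule.span_le]
    rintro _ ⟨i, rfl⟩
    rw [SetLike.mem_coe, Submodule.mem_pi]
    intro j _
    simp only [Pi.smul_apply, Pi.single_apply, smul_eq_mul]
    by_cases h : j = i
    · subst h
      rw [if_pos rfl, mul_one]
      exact Ideal.mem_span_singleton_self _
    · rw [if_neg h, mul_zero]
      exact Submodule.zero_mem _
  · intro x hx
    rw [Submodule.mem_pi] at hx
    have hxi : ∀ i, ∃ a : ℤ, a * c i = x i :=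
      fun i => Ideal.mem_span_singleton'.mp (hx i trivial)
    choose a ha using hxi
    have hrepr : x = ∑ i, a i • (c i • (Pi.single i 1 : ι → ℤ)) := by
      funext j
      rw [Finset.sum_apply]
      have hterm : ∀ i, (a i • (c i • (Pi.single i 1 : ι → ℤ))) j = if i = j then x j else 0 := by
        intro i
        simp only [Pi.smul_apply, Pi.single_apply, smul_eq_mul]
        by_cases h : j = i
        · subst h
          rw [if_pos rfl, if_pos rfl, mul_one, ha]
        · rw [if_neg h, if_neg (fun hh => h hh.symm), mul_zero, mul_zero]
      rw [Finset.sum_congr rfl (fun i _ => hterm i)]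
      simp
    rw [hrepr]
    exact Submodule.sum_mem _
      (fun i _ => Submodule.smul_mem _ _ (Submodule.subset_span ⟨i, rfl⟩))

end S14

/-- `S(A_{n,k,k,0}) ≅ ⊕_{j=0}^{k} (ℤ/C(n−k−j,k−j)ℤ)^{μ_j(n)}`. -/
theorem statement14 (n k : ℕ) (hn : 3 * k ≤ n + 1) :
    Nonempty (SmithGroup (interMat n k k 0) ≃+
      ((j : Fin (k + 1)) → Fin (mu n j).toNat → ZMod ((n - k - j).choose (k - j)))) := by
  classical
  open S14 in
  have hkn : k ≤ n := by omega
  have h2k1 : 2 * k ≤ n + 1 := by omega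
  have h2k : 2 * k ≤ n := by omega
  obtain ⟨b, hb⟩ := S14.exists_basis n k (S14.span_fam n k h2k) (S14.card_idx n k h2k1 hkn)
  have hP : Submodule.span ℤ (Set.range fun r : ↥(ksubsets n k) => interMat n k k 0 r)
      = Submodule.span ℤ
          (Set.range fun σ : S14.idx n k => ((S14.dd n k σ.1 : ℕ) : ℤ) • b σ) := by
    rw [S14.span_rows n k hn]
    have : (fun σ : S14.idx n k => ((S14.dd n k σ.1 : ℕ) : ℤ) • S14.fam n k σ)
        = fun σ : S14.idx n k => ((S14.dd n k σ.1 : ℕ) : ℤ) • b σ := by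
      funext σ
      rw [hb σ]
    rw [this]
  let E1 := Submodule.quotEquivOfEq _ _ hP
  have hmap : Submodule.map (b.equivFun : ((↥(ksubsets n k)) → ℤ) ≃ₗ[ℤ] (S14.idx n k → ℤ)).toLinearMap
      (Submodule.span ℤ (Set.range fun σ : S14.idx n k => ((S14.dd n k σ.1 : ℕ) : ℤ) • b σ))
      = Submodule.pi Set.univ (fun σ : S14.idx n k => Ideal.span {((S14.dd n k σ.1 : ℕ) : ℤ)}) := by
    rw [Submodule.map_span, ← Set.range_comp, LinearEquiv.coe_coe]
    have hcomp : (⇑b.equivFun ∘ fun σ : S14.idx n k => ((S14.dd n k σ.1 : ℕ) : ℤ) • b σ)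
        = fun σ : S14.idx n k => ((S14.dd n k σ.1 : ℕ) : ℤ) • Pi.single σ (1:ℤ) := by
      funext σ
      simp only [Function.comp_apply, map_smul]
      congr 1
      funext τ
      rw [Module.Basis.equivFun_self, Pi.single_apply]
      exact if_congr eq_comm rfl rfl
    rw [hcomp, S14.span_single]
  let E2 := Submodule.Quotient.equiv _ _
    (b.equivFun : ((↥(ksubsets n k)) → ℤ) ≃ₗ[ℤ] (S14.idx n k → ℤ)) hmap
  let E3 := Submodule.quotientPi (fun σ : S14.idx n k => Ideal.span {((S14.dd n k σ.1 : ℕ) : ℤ)})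
  let E4 := AddEquiv.piCongrRight
    (fun σ : S14.idx n k => (Int.quotientSpanNatEquivZMod (S14.dd n k σ.1)).toAddEquiv)
  let E5 : ((σ : S14.idx n k) → ZMod (S14.dd n k σ.1)) ≃+
      ((i : Fin (k+1)) → (S : ↥(std n (i:ℕ))) → ZMod (S14.dd n k i)) :=
    AddEquiv.mk' (Equiv.piCurry fun (i : Fin (k+1)) (_ : ↥(std n (i:ℕ))) => ZMod (S14.dd n k i))
      (fun f g => rfl)
  have hcardstd : ∀ j : Fin (k+1), Fintype.card ↥(std n (j:ℕ)) = (mu n (j:ℕ)).toNat := by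
    intro j
    have hj := j.is_le
    have h := S14.card_std (n := n) (i := (j:ℕ)) (by omega)
    rw [Fintype.card_coe, ← h, Int.toNat_natCast]
  let E6 : ((i : Fin (k+1)) → (S : ↥(std n (i:ℕ))) → ZMod (S14.dd n k i)) ≃+
      ((j : Fin (k + 1)) → Fin (mu n j).toNat → ZMod ((n - k - j).choose (k - j))) :=
    AddEquiv.piCongrRight fun j =>
      AddEquiv.arrowCongr (Fintype.equivFinOfCardEq (hcardstd j)) (AddEquiv.refl _)
  exact ⟨((((E1.trans E2).trans E3).toAddEquiv.trans E4).trans E5).trans E6⟩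
end
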